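/- arXiv:0704.0095 — 6 statements merged into one kernel-verified Lean document; each statement's English description precedes it below -/
import Mathlib

section
/- Let ρ₁ and ρ₂ be two periodic pseudodistances on a locally compact group G. Then there is a constant C > 0 such that for all x, y ∈ G: (1/C)·ρ₂(x,y) − C ≤ ρ₁(x,y) ≤ C·ρ₂(x,y) + C. -/
open MeasureTheory Filter Topology Pointwise

/-- `ρ` is a pseudodistance: nonnegative, symmetric, and satisfies the triangle inequality. -/
def IsPseudoDist {G : Type*} [Group G] (ρ : G → G → ℝ) : Prop :=
  (∀ x y : G, 0 ≤ ρ x y) ∧ (∀ x y : G, ρ x y = ρ y x) ∧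
    ∀ x y z : G, ρ x z ≤ ρ x y + ρ y z

/-- `ρ` is locally bounded: it maps compact subsets of `G × G` to bounded sets of reals. -/
def IsLocallyBoundedDist {G : Type*} [Group G] [TopologicalSpace G] (ρ : G → G → ℝ) : Prop :=
  ∀ K : Set (G × G), IsCompact K → ∃ M : ℝ, ∀ p ∈ K, ρ p.1 p.2 ≤ M

/-- `ρ` is proper: balls around the identity are relatively compact. -/
def IsProperDist {G : Type*} [Group G] [TopologicalSpace G] (ρ : G → G → ℝ) : Prop :=
  ∀ t : ℝ, 0 < t → IsCompact (closure {y : G | ρ 1 y ≤ t})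

/-- `ρ` is asymptotically geodesic: for every `ε > 0` there is `s > 0` such that any two points
can be joined by a chain of points with consecutive distances at most `s` and total length at
most `(1 + ε)` times the distance. -/
def IsAsympGeodesic {G : Type*} [Group G] (ρ : G → G → ℝ) : Prop :=
  ∀ ε : ℝ, 0 < ε → ∃ s : ℝ, 0 < s ∧ ∀ x y : G, ∃ n : ℕ, ∃ c : ℕ → G,
    c 0 = x ∧ c n = y ∧ (∀ i < n, ρ (c i) (c (i + 1)) ≤ s) ∧
    ∑ i ∈ Finset.range n, ρ (c i) (c (i + 1)) ≤ (1 + ε) * ρ x y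

/-- A closed subgroup `H` of `G` is co-compact if `H · F = G` for some compact `F ⊆ G`. -/
def IsCocompactSubgroup {G : Type*} [Group G] [TopologicalSpace G] (H : Subgroup G) : Prop :=
  IsClosed (H : Set G) ∧ ∃ F : Set G, IsCompact F ∧ (H : Set G) * F = Set.univ

/-- A periodic pseudodistance on `G`: a locally bounded, proper, asymptotically geodesic
pseudodistance which is invariant under left translations by some closed co-compact subgroup. -/
def IsPeriodicPseudoDist {G : Type*} [Group G] [TopologicalSpace G] (ρ : G → G → ℝ) : Prop :=
  IsPseudoDist ρ ∧ IsLocallyBoundedDist ρ ∧ IsProperDist ρ ∧ IsAsympGeodesic ρ ∧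
    ∃ H : Subgroup G, IsCocompactSubgroup H ∧ ∀ h ∈ H, ∀ x y : G, ρ (h * x) (h * y) = ρ x y


section CoarseAux

set_option linter.unusedSectionVars false

variable {G : Type*} [Group G] [TopologicalSpace G] [IsTopologicalGroup G]

/-- Triangle inequality along a chain. -/
lemma chain_triangle (ρ : G → G → ℝ) (hρ : IsPseudoDist ρ) (c : ℕ → G) :
    ∀ n : ℕ, ρ (c 0) (c (n + 1)) ≤ ∑ i ∈ Finset.range (n + 1), ρ (c i) (c (i + 1)) := by
  intro n
  induction n with
  | zero => simp
  | succ n ih =>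
    rw [Finset.sum_range_succ]
    calc ρ (c 0) (c (n + 2)) ≤ ρ (c 0) (c (n + 1)) + ρ (c (n + 1)) (c (n + 2)) :=
      hρ.2.2 _ _ _
    _ ≤ _ := by linarith

/-- A periodic pseudodistance is bounded on pairs with displacement in a fixed compact set. -/
lemma bounded_on_compact (ρ : G → G → ℝ) (hlb : IsLocallyBoundedDist ρ)
    (H : Subgroup G) (hH : IsCocompactSubgroup H)
    (hinv : ∀ h ∈ H, ∀ x y : G, ρ (h * x) (h * y) = ρ x y)
    (K : Set G) (hK : IsCompact K) :
    ∃ M : ℝ, ∀ x y : G, x⁻¹ * y ∈ K → ρ x y ≤ M := by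
  obtain ⟨-, F, hF, hHF⟩ := hH
  obtain ⟨M, hM⟩ := hlb (F ×ˢ (F * K)) (hF.prod (hF.mul hK))
  refine ⟨M, fun x y hxy => ?_⟩
  have hx : x ∈ (H : Set G) * F := by rw [hHF]; trivial
  obtain ⟨h, hh, f, hf, rfl⟩ := Set.mem_mul.mp hx
  have h1 : ρ (h * f) y = ρ f (h⁻¹ * y) := by
    rw [← hinv h hh f (h⁻¹ * y), mul_inv_cancel_left]
  have h2 : h⁻¹ * y = f * ((h * f)⁻¹ * y) := by group
  rw [h1, h2]
  exact hM (f, f * ((h * f)⁻¹ * y)) ⟨hf, Set.mul_mem_mul hf hxy⟩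

/-- For a periodic pseudodistance, pairs at bounded distance have displacement in a
fixed compact set. -/
lemma displacement_compact (ρ : G → G → ℝ) (hρ : IsPeriodicPseudoDist ρ)
    (s : ℝ) (hs : 0 < s) :
    ∃ K : Set G, IsCompact K ∧ ∀ x y : G, ρ x y ≤ s → x⁻¹ * y ∈ K := by
  obtain ⟨hpd, hlb, hprop, -, H, ⟨-, F, hF, hHF⟩, hinv⟩ := hρ
  obtain ⟨a, ha⟩ := hlb (({1} : Set G) ×ˢ F) (isCompact_singleton.prod hF)
  have htpos : 0 < max a 0 + s := add_pos_of_nonneg_of_pos (le_max_right a 0) hs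
  refine ⟨F⁻¹ * closure {z : G | ρ 1 z ≤ max a 0 + s},
    hF.inv.mul (hprop _ htpos), fun x y hxy => ?_⟩
  have hx : x ∈ (H : Set G) * F := by rw [hHF]; trivial
  obtain ⟨h, hh, f, hf, rfl⟩ := Set.mem_mul.mp hx
  have h1 : ρ f (h⁻¹ * y) = ρ (h * f) y := by
    rw [← hinv h hh f (h⁻¹ * y), mul_inv_cancel_left]
  have h2 : ρ 1 (h⁻¹ * y) ≤ max a 0 + s := by
    have htri := hpd.2.2 1 f (h⁻¹ * y)
    have haf : ρ 1 f ≤ a := ha (1, f) ⟨rfl, hf⟩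
    have := le_max_left a 0
    rw [h1] at htri
    linarith
  have hmem : h⁻¹ * y ∈ closure {z : G | ρ 1 z ≤ max a 0 + s} := subset_closure h2
  have h3 : (h * f)⁻¹ * y = f⁻¹ * (h⁻¹ * y) := by group
  rw [h3]
  exact Set.mul_mem_mul (Set.inv_mem_inv.mpr hf) hmem

/-- The key chain estimate. -/
lemma chain_bound (ρ₁ ρ₂ : G → G → ℝ) (h₂ : IsPseudoDist ρ₂)
    (htri₁ : ∀ x y z : G, ρ₁ x z ≤ ρ₁ x y + ρ₁ y z)
    (s M : ℝ) (hs : 0 < s) (hM0 : 0 ≤ M)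
    (hM : ∀ x y : G, ρ₂ x y ≤ s → ρ₁ x y ≤ M) (hMdiag : ∀ x : G, ρ₁ x x ≤ M) :
    ∀ n : ℕ, ∀ c : ℕ → G, (∀ i < n, ρ₂ (c i) (c (i + 1)) ≤ s) →
      ρ₁ (c 0) (c n) ≤ (2 * M / s) * (∑ i ∈ Finset.range n, ρ₂ (c i) (c (i + 1))) + M := by
  intro n
  induction n using Nat.strong_induction_on with
  | _ n ih =>
  intro c hc
  classical
  rcases Nat.eq_zero_or_pos n with rfl | hpos
  · simpa using hMdiag (c 0)
  set P : ℕ → Prop := fun j => ∑ i ∈ Finset.range j, ρ₂ (c i) (c (i + 1)) ≤ s with hP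
  have hP1 : P 1 := by simpa [hP] using hc 0 hpos
  obtain ⟨j, hj1, hjn, hPj, hmax⟩ :
      ∃ j, 1 ≤ j ∧ j ≤ n ∧ P j ∧ ∀ k, j < k → k ≤ n → ¬ P k :=
    ⟨Nat.findGreatest P n, Nat.le_findGreatest hpos hP1, Nat.findGreatest_le n,
      Nat.findGreatest_spec hpos hP1, fun k hk hkn => Nat.findGreatest_is_greatest hk hkn⟩
  have hsum_nonneg : ∀ m : ℕ, 0 ≤ ∑ i ∈ Finset.range m, ρ₂ (c i) (c (i + 1)) :=
    fun m => Finset.sum_nonneg fun i _ => h₂.1 _ _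
  have hcoef : (0:ℝ) ≤ 2 * M / s := div_nonneg (by linarith) hs.le
  have hρ1_0j : ρ₁ (c 0) (c j) ≤ M := by
    apply hM
    obtain ⟨m, rfl⟩ : ∃ m, j = m + 1 := ⟨j - 1, by omega⟩
    exact le_trans (chain_triangle ρ₂ h₂ c m) hPj
  have hPj' : ∑ i ∈ Finset.range j, ρ₂ (c i) (c (i + 1)) ≤ s := hPj
  rcases eq_or_lt_of_le hjn with rfl | hjlt
  · have := mul_nonneg hcoef (hsum_nonneg j)
    linarith
  · have hnotP : ¬ P (j + 1) := hmax (j + 1) (by omega) (by omega)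
    have hgt : s < ∑ i ∈ Finset.range (j + 1), ρ₂ (c i) (c (i + 1)) := not_le.mp hnotP
    set n' := n - (j + 1) with hn'
    have hsplit : n = (j + 1) + n' := by omega
    have hstep : ρ₁ (c j) (c (j + 1)) ≤ M := hM _ _ (hc j hjlt)
    have hrec : ρ₁ (c (j + 1)) (c n) ≤
        (2 * M / s) * (∑ i ∈ Finset.range n', ρ₂ (c (j + 1 + i)) (c (j + 1 + i + 1))) + M := by
      have h' := ih n' (by omega) (fun i => c (j + 1 + i)) (fun i hi => hc (j + 1 + i) (by omega))
      have hcn : c (j + 1 + n') = c n := by rw [← hsplit]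
      simpa [hcn, ← add_assoc] using h'
    have hsum : ∑ i ∈ Finset.range n, ρ₂ (c i) (c (i + 1)) =
        (∑ i ∈ Finset.range (j + 1), ρ₂ (c i) (c (i + 1))) +
        ∑ i ∈ Finset.range n', ρ₂ (c (j + 1 + i)) (c (j + 1 + i + 1)) := by
      rw [hsplit, Finset.sum_range_add]
    have htri : ρ₁ (c 0) (c n) ≤ ρ₁ (c 0) (c j) + (ρ₁ (c j) (c (j + 1)) + ρ₁ (c (j + 1)) (c n)) :=
      le_trans (htri₁ _ (c j) _) (by linarith [htri₁ (c j) (c (j + 1)) (c n)])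
    have key : 2 * M ≤ (2 * M / s) * ∑ i ∈ Finset.range (j + 1), ρ₂ (c i) (c (i + 1)) := by
      calc 2 * M = (2 * M / s) * s := by field_simp
      _ ≤ _ := mul_le_mul_of_nonneg_left hgt.le hcoef
    rw [hsum, mul_add]
    linarith

/-- One-sided coarse domination between periodic pseudodistances. -/
lemma one_sided_bound (ρ₁ ρ₂ : G → G → ℝ)
    (h₁ : IsPeriodicPseudoDist ρ₁) (h₂ : IsPeriodicPseudoDist ρ₂) :
    ∃ C : ℝ, 0 < C ∧ ∀ x y : G, ρ₁ x y ≤ C * ρ₂ x y + C := by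
  obtain ⟨hpd₁, hlb₁, -, -, H₁, hH₁, hinv₁⟩ := h₁
  obtain ⟨s, hs, hchain⟩ := h₂.2.2.2.1 1 one_pos
  obtain ⟨K, hK, hKmem⟩ := displacement_compact ρ₂ h₂ s hs
  obtain ⟨M, hM⟩ := bounded_on_compact ρ₁ hlb₁ H₁ hH₁ hinv₁ (K ∪ {1})
    (hK.union isCompact_singleton)
  have hMdiag : ∀ x : G, ρ₁ x x ≤ M := fun x => hM x x (by simp)
  have hM0 : 0 ≤ M := le_trans (hpd₁.1 1 1) (hMdiag 1)
  have hMs : ∀ x y : G, ρ₂ x y ≤ s → ρ₁ x y ≤ M :=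
    fun x y h => hM x y (Or.inl (hKmem x y h))
  refine ⟨max (2 * M / s * 2 + M) 0 + 1, by positivity, fun x y => ?_⟩
  obtain ⟨n, c, hc0, hcn, hstep, hsum⟩ := hchain x y
  have hcb := chain_bound ρ₁ ρ₂ h₂.1 hpd₁.2.2 s M hs hM0 hMs hMdiag n c hstep
  rw [hc0, hcn] at hcb
  have hρ2 : 0 ≤ ρ₂ x y := h₂.1.1 x y
  have hcoef : (0:ℝ) ≤ 2 * M / s := div_nonneg (by linarith) hs.le
  have h1 : (2 * M / s) * (∑ i ∈ Finset.range n, ρ₂ (c i) (c (i + 1)))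
      ≤ (2 * M / s) * ((1 + 1) * ρ₂ x y) := mul_le_mul_of_nonneg_left hsum hcoef
  have h2 : 2 * M / s * 2 + M ≤ max (2 * M / s * 2 + M) 0 := le_max_left _ _
  nlinarith [mul_le_mul_of_nonneg_right h2 hρ2]

end CoarseAux

/-- **Coarse equivalence of periodic pseudodistances** (Proposition 4.1). Any two periodic
pseudodistances `ρ₁`, `ρ₂` on a locally compact group `G` satisfy
`(1/C)·ρ₂(x,y) − C ≤ ρ₁(x,y) ≤ C·ρ₂(x,y) + C` for some constant `C > 0`. -/
theorem coarse_equivalence_of_periodic_pseudodistances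
    {G : Type*} [Group G] [TopologicalSpace G] [IsTopologicalGroup G] [LocallyCompactSpace G]
    (ρ₁ ρ₂ : G → G → ℝ)
    (h₁ : IsPeriodicPseudoDist ρ₁) (h₂ : IsPeriodicPseudoDist ρ₂) :
    ∃ C : ℝ, 0 < C ∧ ∀ x y : G,
      (1 / C) * ρ₂ x y - C ≤ ρ₁ x y ∧ ρ₁ x y ≤ C * ρ₂ x y + C := by
  obtain ⟨C₁, hC₁, hb₁⟩ := one_sided_bound ρ₁ ρ₂ h₁ h₂
  obtain ⟨C₂, hC₂, hb₂⟩ := one_sided_bound ρ₂ ρ₁ h₂ h₁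
  refine ⟨max (max C₁ C₂) 1, by positivity, fun x y => ?_⟩
  set C := max (max C₁ C₂) 1 with hC
  have hC1le : C₁ ≤ C := le_trans (le_max_left _ _) (le_max_left _ _)
  have hC2le : C₂ ≤ C := le_trans (le_max_right C₁ C₂) (le_max_left _ _)
  have h1C : (1:ℝ) ≤ C := le_max_right _ _
  have hρ2 : 0 ≤ ρ₂ x y := h₂.1.1 x y
  constructor
  · have hb := hb₂ x y
    have h1 : (1 / C) * ρ₂ x y ≤ (1 / C₂) * ρ₂ x y :=
      mul_le_mul_of_nonneg_right (one_div_le_one_div_of_le hC₂ hC2le) hρ2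
    have h2 : (1 / C₂) * ρ₂ x y ≤ ρ₁ x y + 1 := by
      rw [one_div, inv_mul_le_iff₀ hC₂]
      nlinarith
    linarith
  · have hb := hb₁ x y
    nlinarith [mul_le_mul_of_nonneg_right hC1le hρ2]
end

section
/- Let G be a locally compact group, ρ a periodic pseudodistance on G, and K a compact subgroup of G. Then there is a constant C₀ > 0, depending only on ρ and K, such that |ρ(xk₁, yk₂) − ρ(x,y)| ≤ C₀ for all k₁, k₂ ∈ K and all x, y ∈ G. -/
open MeasureTheory Filter Topology Pointwise

/-- **Right translations by a compact subgroup move periodic pseudodistances boundedly**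
(Lemma 4.6). If `ρ` is a periodic pseudodistance on a locally compact group `G` and `K` is a
compact subgroup of `G`, then there is `C₀ > 0`, depending only on `ρ` and `K`, with
`|ρ(xk₁, yk₂) − ρ(x,y)| ≤ C₀` for all `k₁, k₂ ∈ K` and all `x, y ∈ G`. -/
theorem periodic_pseudodistance_right_compact_bounded
    {G : Type*} [Group G] [TopologicalSpace G] [IsTopologicalGroup G] [LocallyCompactSpace G]
    (ρ : G → G → ℝ) (hρ : IsPeriodicPseudoDist ρ)
    (K : Subgroup G) (hK : IsCompact (K : Set G)) :
    ∃ C₀ : ℝ, 0 < C₀ ∧ ∀ k₁ ∈ K, ∀ k₂ ∈ K, ∀ x y : G,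
      |ρ (x * k₁) (y * k₂) - ρ x y| ≤ C₀ := by
  obtain ⟨⟨hnn, hsym, htri⟩, hlb, -, -, H, ⟨-, F, hF, hHF⟩, hinv⟩ := hρ
  set S : Set (G × G) := (fun p : G × G => (p.1, p.1 * p.2)) '' (F ×ˢ (K : Set G)) with hS
  have hScomp : IsCompact S := (hF.prod hK).image (by fun_prop)
  obtain ⟨M, hM⟩ := hlb S hScomp
  have key : ∀ x : G, ∀ k ∈ K, ρ x (x * k) ≤ max M 0 := by
    intro x k hk
    have hx : x ∈ (H : Set G) * F := by rw [hHF]; trivial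
    obtain ⟨h, hh, f, hf, rfl⟩ := hx
    have : ρ (h * f) (h * f * k) = ρ f (f * k) := by
      rw [mul_assoc]; exact hinv h hh f (f * k)
    rw [this]
    refine le_trans (hM (f, f * k) ?_) (le_max_left _ _)
    exact ⟨(f, k), Set.mk_mem_prod hf hk, rfl⟩
  refine ⟨2 * max M 0 + 1, by positivity, fun k₁ hk₁ k₂ hk₂ x y => ?_⟩
  have h1 := key x k₁ hk₁
  have h2 := key y k₂ hk₂
  rw [abs_sub_le_iff]
  constructor
  · have t1 := htri (x * k₁) x (y * k₂)
    have t2 := htri x y (y * k₂)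
    have s1 := hsym (x * k₁) x
    have s2 := hsym y (y * k₂)
    linarith
  · have t1 := htri x (x * k₁) y
    have t2 := htri (x * k₁) (y * k₂) y
    have s2 := hsym (y * k₂) y
    linarith
end

section
/- Let G be a locally compact group, K a compact subgroup of G, and ρ a periodic pseudodistance on G which is Borel measurable. Define ρ^K(x,y) = ∫_{K×K} ρ(xk₁, yk₂) dk₁ dk₂, where dk is the normalized Haar probability measure on K. Then ρ^K is a periodic pseudodistance on G, ρ^K lies at a bounded distance from ρ (i.e. sup_{x,y∈G} |ρ^K(x,y) − ρ(x,y)| < ∞), and ρ^K(e,x)/ρ(e,x) → 1 as x → ∞ in G (i.e. for every ε > 0 there is a compact set L ⊆ G such that |ρ^K(e,x)/ρ(e,x) − 1| ≤ ε for all x ∉ L). -/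
open MeasureTheory Filter Topology Pointwise

/-- Chain triangle inequality. -/
lemma chain_le_aux {G : Type*} (ρ : G → G → ℝ)
    (htri : ∀ x y z : G, ρ x z ≤ ρ x y + ρ y z) :
    ∀ n : ℕ, ∀ c : ℕ → G, ρ (c 0) (c (n + 1)) ≤ ∑ i ∈ Finset.range (n + 1), ρ (c i) (c (i + 1)) := by
  intro n
  induction n with
  | zero => intro c; simp
  | succ n ih =>
    intro c
    rw [Finset.sum_range_succ]
    calc ρ (c 0) (c (n + 2)) ≤ ρ (c 0) (c (n + 1)) + ρ (c (n + 1)) (c (n + 2)) :=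
          htri _ _ _
      _ ≤ _ := by have := ih c; linarith

/-- Coarsening lemma: a chain for `ρ` with small steps can be turned into a chain for `σ`
(a function at distance `M` above `ρ`) with controlled steps and total length. -/
lemma coarsen_aux {G : Type*} (ρ σ : G → G → ℝ) (M S : ℝ) (hM : 0 ≤ M) (hS : 0 < S)
    (hρ0 : ∀ x y : G, 0 ≤ ρ x y)
    (htri : ∀ x y z : G, ρ x z ≤ ρ x y + ρ y z)
    (hσρ : ∀ x y : G, σ x y ≤ ρ x y + M) :
    ∀ n : ℕ, ∀ c : ℕ → G, (∀ i < n, ρ (c i) (c (i + 1)) ≤ S) →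
    ∃ m : ℕ, ∃ d : ℕ → G, d 0 = c 0 ∧ d m = c n ∧
      (∀ j < m, σ (d j) (d (j + 1)) ≤ 2 * S + M) ∧
      (∑ j ∈ Finset.range m, σ (d j) (d (j + 1))) * S ≤
        (∑ i ∈ Finset.range n, ρ (c i) (c (i + 1)) + M) * S
          + M * ∑ i ∈ Finset.range n, ρ (c i) (c (i + 1)) := by
  intro n
  induction n using Nat.strong_induction_on with
  | _ n ih =>
  intro c hstep
  rcases Nat.eq_zero_or_pos n with rfl | hn
  · refine ⟨0, fun _ => c 0, rfl, rfl, by omega, by simpa using mul_nonneg hM hS.le⟩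
  set L := ∑ i ∈ Finset.range n, ρ (c i) (c (i + 1)) with hL
  have hLnn : 0 ≤ L := Finset.sum_nonneg fun i _ => hρ0 _ _
  have hchain : ρ (c 0) (c n) ≤ L := by
    rw [hL]
    obtain ⟨n', rfl⟩ : ∃ n', n = n' + 1 := ⟨n - 1, by omega⟩
    exact chain_le_aux ρ htri n' c
  by_cases hLS : L ≤ S
  · -- single segment
    set d : ℕ → G := fun j => if j = 0 then c 0 else c n with hd
    have hd0 : d 0 = c 0 := by simp [hd]
    have hd1 : d 1 = c n := by simp [hd]
    refine ⟨1, d, hd0, hd1, ?_, ?_⟩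
    · intro j hj
      interval_cases j
      rw [hd0, hd1]
      have := hσρ (c 0) (c n)
      linarith
    · rw [Finset.sum_range_one, hd0, hd1]
      have h2 := hσρ (c 0) (c n)
      nlinarith [mul_nonneg hM hLnn]
  · -- L > S : split off an initial piece of ρ-length in (S, 2S]
    push_neg at hLS
    have hex : ∃ t : ℕ, S < ∑ i ∈ Finset.range t, ρ (c i) (c (i + 1)) := ⟨n, hLS⟩
    classical
    obtain ⟨t, htspec, htmin⟩ : ∃ t : ℕ, (S < ∑ i ∈ Finset.range t, ρ (c i) (c (i + 1))) ∧
        ∀ s < t, ¬ S < ∑ i ∈ Finset.range s, ρ (c i) (c (i + 1)) :=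
      ⟨Nat.find hex, Nat.find_spec hex, fun s hs => Nat.find_min hex hs⟩
    have htn : t ≤ n := by
      by_contra h
      exact htmin n (by omega) hLS
    have ht0 : 0 < t := by
      rcases Nat.eq_zero_or_pos t with h0 | h
      · exfalso; rw [h0] at htspec; simp at htspec; linarith
      · exact h
    set P := ∑ i ∈ Finset.range t, ρ (c i) (c (i + 1)) with hP
    have hPprev : ∑ i ∈ Finset.range (t - 1), ρ (c i) (c (i + 1)) ≤ S := by
      by_contra h
      exact htmin (t - 1) (by omega) (lt_of_not_ge h)
    have hP2S : P ≤ 2 * S := by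
      have he : P = ∑ i ∈ Finset.range (t - 1), ρ (c i) (c (i + 1)) + ρ (c (t - 1)) (c (t - 1 + 1)) := by
        rw [hP]
        obtain ⟨t', ht'⟩ : ∃ t', t = t' + 1 := ⟨t - 1, by omega⟩
        rw [ht']
        simp [Finset.sum_range_succ]
      have hseg := hstep (t - 1) (by omega)
      linarith
    have hρ0t : ρ (c 0) (c t) ≤ P := by
      rw [hP]
      obtain ⟨t', ht'⟩ : ∃ t', t = t' + 1 := ⟨t - 1, by omega⟩
      rw [ht']
      exact chain_le_aux ρ htri t' c
    -- tail chain
    obtain ⟨m', d', hd'0, hd'm, hd'step, hd'sum⟩ :=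
      ih (n - t) (by omega) (fun i => c (t + i))
        (fun i hi => by
          have h1 : t + i < n := by omega
          have := hstep (t + i) h1
          simpa [Nat.add_assoc] using this)
    simp only [← Nat.add_assoc] at hd'sum
    have hd'0' : d' 0 = c t := by simpa using hd'0
    have hd'm' : d' m' = c n := by
      have e : t + (n - t) = n := by omega
      rw [← e]; simpa using hd'm
    set L' := ∑ i ∈ Finset.range (n - t), ρ (c (t + i)) (c (t + i + 1)) with hL'
    have hL'nn : 0 ≤ L' := Finset.sum_nonneg fun i _ => hρ0 _ _
    have hsplit : L = P + L' := by
      rw [hL, hP, hL']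
      rw [Finset.range_eq_Ico,
        ← Finset.sum_Ico_consecutive (fun i => ρ (c i) (c (i + 1))) (Nat.zero_le t) htn]
      congr 1
      · rw [Finset.range_eq_Ico]
      · rw [Finset.sum_Ico_eq_sum_range]
    set d : ℕ → G := fun j => if j = 0 then c 0 else d' (j - 1) with hd
    have hd0 : d 0 = c 0 := by simp [hd]
    have hdsucc : ∀ j : ℕ, d (j + 1) = d' j := fun j => by simp [hd]
    refine ⟨m' + 1, d, hd0, by rw [hdsucc m', hd'm'], ?_, ?_⟩
    · intro j hj
      rcases Nat.eq_zero_or_pos j with rfl | hjpos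
      · rw [hd0, hdsucc 0, hd'0']
        have := hσρ (c 0) (c t)
        linarith
      · obtain ⟨j', rfl⟩ : ∃ j', j = j' + 1 := ⟨j - 1, by omega⟩
        rw [hdsucc j', hdsucc (j' + 1)]
        exact hd'step j' (by omega)
    · rw [Finset.sum_range_succ']
      have hsum_eq : ∑ i ∈ Finset.range m', σ (d (i + 1)) (d (i + 1 + 1)) =
          ∑ i ∈ Finset.range m', σ (d' i) (d' (i + 1)) :=
        Finset.sum_congr rfl fun i _ => by rw [hdsucc i, hdsucc (i + 1)]
      rw [hsum_eq, hd0, hdsucc 0, hd'0']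
      have hfirst : σ (c 0) (c t) ≤ P + M := by
        have := hσρ (c 0) (c t); linarith
      have h2 : σ (c 0) (c t) * S ≤ (P + M) * S := mul_le_mul_of_nonneg_right hfirst hS.le
      have hMP : M * S ≤ M * P := mul_le_mul_of_nonneg_left (le_of_lt htspec) hM
      rw [hsplit]
      nlinarith [hS.le]

/-- **Averaging a periodic pseudodistance over a compact subgroup** (Section 4.5). Let `ρ` be a
Borel measurable periodic pseudodistance on a locally compact group `G`, let `K` be a compact
subgroup of `G` and let `ν` be the normalized Haar probability measure of `K` (viewed as a
measure on `G` supported on `K` and invariant under left translations by elements of `K`).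
Then the average `ρ^K(x,y) = ∫∫ ρ(xk₁, yk₂) dν(k₁) dν(k₂)` is again a periodic pseudodistance,
it lies at a bounded distance from `ρ`, and `ρ^K(e,x)/ρ(e,x) → 1` as `x → ∞` in `G`. -/
theorem averaged_pseudodistance_periodic_and_asymptotic
    {G : Type*} [Group G] [TopologicalSpace G] [IsTopologicalGroup G] [LocallyCompactSpace G]
    [MeasurableSpace G] [BorelSpace G]
    (ρ : G → G → ℝ) (hρ : IsPeriodicPseudoDist ρ)
    (hmeas : Measurable (Function.uncurry ρ))
    (K : Subgroup G) (hK : IsCompact (K : Set G))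
    (ν : Measure G) [IsProbabilityMeasure ν]
    (hsupp : ν ((K : Set G)ᶜ) = 0)
    (hinv : ∀ k ∈ K, Measure.map (fun x : G => k * x) ν = ν) :
    IsPeriodicPseudoDist (fun x y : G => ∫ k₁, ∫ k₂, ρ (x * k₁) (y * k₂) ∂ν ∂ν) ∧
    (∃ C : ℝ, ∀ x y : G,
      |(∫ k₁, ∫ k₂, ρ (x * k₁) (y * k₂) ∂ν ∂ν) - ρ x y| ≤ C) ∧
    (∀ ε : ℝ, 0 < ε → ∃ L : Set G, IsCompact L ∧ ∀ x ∉ L,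
      |(∫ k₁, ∫ k₂, ρ (1 * k₁) (x * k₂) ∂ν ∂ν) / ρ 1 x - 1| ≤ ε) := by
  obtain ⟨⟨hnn, hsym, htri⟩, hLB, hProp, hGeo, H, ⟨Hcl, F, hFc, hHF⟩, hHinv⟩ := hρ
  -- the uniform bound M
  obtain ⟨M₀, hM₀⟩ := hLB (F ×ˢ (F * (K : Set G))) (hFc.prod (hFc.mul hK))
  set M := max M₀ 0 with hM
  have hM0 : (0:ℝ) ≤ M := le_max_right _ _
  have hxk : ∀ x : G, ∀ k ∈ (K : Set G), ρ x (x * k) ≤ M := by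
    intro x k hk
    have hx : x ∈ (H : Set G) * F := by rw [hHF]; trivial
    rw [Set.mem_mul] at hx
    obtain ⟨h, hh, f, hf, hxeq⟩ := hx
    have e1 : ρ x (x * k) = ρ f (f * k) := by
      rw [← hxeq, mul_assoc]
      exact hHinv h hh f (f * k)
    rw [e1]
    have hmem : ((f, f * k) : G × G) ∈ F ×ˢ (F * (K : Set G)) :=
      Set.mk_mem_prod hf (Set.mul_mem_mul hf hk)
    exact (hM₀ _ hmem).trans (le_max_left _ _)
  have hpt : ∀ x y : G, ∀ k₁ ∈ (K : Set G), ∀ k₂ ∈ (K : Set G),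
      ρ x y - 2*M ≤ ρ (x*k₁) (y*k₂) ∧ ρ (x*k₁) (y*k₂) ≤ ρ x y + 2*M := by
    intro x y k₁ hk₁ k₂ hk₂
    have h1 : ρ x (x*k₁) ≤ M := hxk x k₁ hk₁
    have h2 : ρ y (y*k₂) ≤ M := hxk y k₂ hk₂
    constructor
    · have ha := htri x (x*k₁) y
      have hb := htri (x*k₁) (y*k₂) y
      have hc := hsym (y*k₂) y
      linarith
    · have ha := htri (x*k₁) x (y*k₂)
      have hb := htri x y (y*k₂)
      have hc := hsym (x*k₁) x
      linarith
  have aeK : ∀ᵐ k ∂ν, k ∈ (K : Set G) := by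
    rw [MeasureTheory.ae_iff]; exact hsupp
  have measF : ∀ x y : G, Measurable (fun p : G × G => ρ (x * p.1) (y * p.2)) := fun x y =>
    hmeas.comp (((continuous_mul_left x).measurable.comp measurable_fst).prodMk
      ((continuous_mul_left y).measurable.comp measurable_snd))
  have meas1 : ∀ a b : G, Measurable (fun k => ρ a (b * k)) := fun a b =>
    hmeas.comp (measurable_const.prodMk (continuous_mul_left b).measurable)
  have int1 : ∀ a b : G, Integrable (fun k => ρ a (b * k)) ν := by
    intro a b
    refine Integrable.mono' (integrable_const (ρ a b + M)) (meas1 a b).aestronglyMeasurable ?_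
    filter_upwards [aeK] with k hk
    rw [Real.norm_eq_abs, abs_of_nonneg (hnn _ _)]
    have h1 := htri a b (b*k)
    have h2 := hxk b k hk
    linarith
  have innerNN : ∀ a b : G, (0:ℝ) ≤ ∫ k, ρ a (b * k) ∂ν := fun a b =>
    integral_nonneg fun k => hnn _ _
  have innerUB : ∀ x y : G, ∀ k₁ ∈ (K : Set G), ∫ k₂, ρ (x*k₁) (y*k₂) ∂ν ≤ ρ x y + 2*M := by
    intro x y k₁ hk₁
    have h : ∫ k₂, ρ (x*k₁) (y*k₂) ∂ν ≤ ∫ _, (ρ x y + 2*M) ∂ν := by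
      apply integral_mono_ae (int1 (x*k₁) y) (integrable_const _)
      filter_upwards [aeK] with k₂ hk₂
      exact (hpt x y k₁ hk₁ k₂ hk₂).2
    simpa using h
  have innerLB : ∀ x y : G, ∀ k₁ ∈ (K : Set G), ρ x y - 2*M ≤ ∫ k₂, ρ (x*k₁) (y*k₂) ∂ν := by
    intro x y k₁ hk₁
    have h : ∫ _, (ρ x y - 2*M) ∂ν ≤ ∫ k₂, ρ (x*k₁) (y*k₂) ∂ν := by
      apply integral_mono_ae (integrable_const _) (int1 (x*k₁) y)
      filter_upwards [aeK] with k₂ hk₂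
      exact (hpt x y k₁ hk₁ k₂ hk₂).1
    simpa using h
  have smOuter : ∀ x y : G, StronglyMeasurable (fun k₁ => ∫ k₂, ρ (x*k₁) (y*k₂) ∂ν) := fun x y =>
    (measF x y).stronglyMeasurable.integral_prod_right'
  have intOuter : ∀ x y : G, Integrable (fun k₁ => ∫ k₂, ρ (x*k₁) (y*k₂) ∂ν) ν := by
    intro x y
    refine Integrable.mono' (integrable_const (ρ x y + 2*M)) (smOuter x y).aestronglyMeasurable ?_
    filter_upwards [aeK] with k₁ hk₁
    rw [Real.norm_eq_abs, abs_of_nonneg (innerNN _ _)]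
    exact innerUB x y k₁ hk₁
  have keyUB : ∀ x y : G, (∫ k₁, ∫ k₂, ρ (x*k₁) (y*k₂) ∂ν ∂ν) ≤ ρ x y + 2*M := by
    intro x y
    have h : (∫ k₁, ∫ k₂, ρ (x*k₁) (y*k₂) ∂ν ∂ν) ≤ ∫ _, (ρ x y + 2*M) ∂ν := by
      apply integral_mono_ae (intOuter x y) (integrable_const _)
      filter_upwards [aeK] with k₁ hk₁
      exact innerUB x y k₁ hk₁
    simpa using h
  have keyLB : ∀ x y : G, ρ x y - 2*M ≤ ∫ k₁, ∫ k₂, ρ (x*k₁) (y*k₂) ∂ν ∂ν := by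
    intro x y
    have h : ∫ _, (ρ x y - 2*M) ∂ν ≤ ∫ k₁, ∫ k₂, ρ (x*k₁) (y*k₂) ∂ν ∂ν := by
      apply integral_mono_ae (integrable_const _) (intOuter x y)
      filter_upwards [aeK] with k₁ hk₁
      exact innerLB x y k₁ hk₁
    simpa using h
  have ρKnn : ∀ x y : G, (0:ℝ) ≤ ∫ k₁, ∫ k₂, ρ (x*k₁) (y*k₂) ∂ν ∂ν := fun x y =>
    integral_nonneg fun k₁ => innerNN _ _
  have aeProdK : ∀ᵐ p ∂(ν.prod ν), p.1 ∈ (K : Set G) ∧ p.2 ∈ (K : Set G) := by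
    have h1 : (ν.prod ν) (Prod.fst ⁻¹' (K : Set G)ᶜ) = 0 := by
      have h := Measure.le_map_apply (measurable_fst.aemeasurable (μ := ν.prod ν)) ((K : Set G)ᶜ)
      rw [Measure.map_fst_prod] at h
      simp only [measure_univ, one_smul] at h
      exact le_antisymm (h.trans hsupp.le) (by simp)
    have h2 : (ν.prod ν) (Prod.snd ⁻¹' (K : Set G)ᶜ) = 0 := by
      have h := Measure.le_map_apply (measurable_snd.aemeasurable (μ := ν.prod ν)) ((K : Set G)ᶜ)
      rw [Measure.map_snd_prod] at h
      simp only [measure_univ, one_smul] at h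
      exact le_antisymm (h.trans hsupp.le) (by simp)
    rw [MeasureTheory.ae_iff]
    apply measure_mono_null (t := Prod.fst ⁻¹' (K : Set G)ᶜ ∪ Prod.snd ⁻¹' (K : Set G)ᶜ)
    · intro p hp; simp only [Set.mem_setOf_eq, not_and_or] at hp
      simpa using hp
    · exact measure_union_null h1 h2
  have intProd : ∀ x y : G, Integrable (fun p : G×G => ρ (x*p.1) (y*p.2)) (ν.prod ν) := by
    intro x y
    refine Integrable.mono' (integrable_const (ρ x y + 2*M)) (measF x y).aestronglyMeasurable ?_
    filter_upwards [aeProdK] with p hp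
    rw [Real.norm_eq_abs, abs_of_nonneg (hnn _ _)]
    exact (hpt x y p.1 hp.1 p.2 hp.2).2
  have swap : ∀ x y : G,
      ∫ k₁, ∫ k₂, ρ (x*k₁) (y*k₂) ∂ν ∂ν = ∫ k₂, ∫ k₁, ρ (x*k₁) (y*k₂) ∂ν ∂ν := fun x y =>
    integral_integral_swap (intProd x y)
  have hsymK : ∀ x y : G,
      (∫ k₁, ∫ k₂, ρ (x*k₁) (y*k₂) ∂ν ∂ν) = ∫ k₁, ∫ k₂, ρ (y*k₁) (x*k₂) ∂ν ∂ν := by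
    intro x y
    have e1 : (∫ k₁, ∫ k₂, ρ (x*k₁) (y*k₂) ∂ν ∂ν)
        = ∫ k₁, ∫ k₂, ρ (y*k₂) (x*k₁) ∂ν ∂ν :=
      congrArg (integral ν) (funext fun k₁ =>
        congrArg (integral ν) (funext fun k₂ => hsym _ _))
    rw [e1]
    exact (swap y x).symm
  have htriK : ∀ x y z : G,
      (∫ k₁, ∫ k₂, ρ (x*k₁) (z*k₂) ∂ν ∂ν)
        ≤ (∫ k₁, ∫ k₂, ρ (x*k₁) (y*k₂) ∂ν ∂ν) + ∫ k₁, ∫ k₂, ρ (y*k₁) (z*k₂) ∂ν ∂ν := by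
    intro x y z
    have intB : Integrable (fun k₃ => ∫ k₂, ρ (y*k₂) (z*k₃) ∂ν) ν := by
      have e : (fun k₃ => ∫ k₂, ρ (y*k₂) (z*k₃) ∂ν) = fun k₃ => ∫ k₂, ρ (z*k₃) (y*k₂) ∂ν :=
        funext fun k₃ => congrArg (integral ν) (funext fun k₂ => hsym _ _)
      rw [e]; exact intOuter z y
    have hBint : (∫ k₃, ∫ k₂, ρ (y*k₂) (z*k₃) ∂ν ∂ν) = ∫ k₁, ∫ k₂, ρ (y*k₁) (z*k₂) ∂ν ∂ν :=
      (swap y z).symm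
    have step1 : ∀ k₁ k₃ : G, ρ (x*k₁) (z*k₃)
        ≤ (∫ k₂, ρ (x*k₁) (y*k₂) ∂ν) + ∫ k₂, ρ (y*k₂) (z*k₃) ∂ν := by
      intro k₁ k₃
      have intB2 : Integrable (fun k₂ => ρ (y*k₂) (z*k₃)) ν := by
        have e : (fun k₂ => ρ (y*k₂) (z*k₃)) = fun k₂ => ρ (z*k₃) (y*k₂) :=
          funext fun k₂ => hsym _ _
        rw [e]; exact int1 (z*k₃) y
      calc ρ (x*k₁) (z*k₃) = ∫ _, ρ (x*k₁) (z*k₃) ∂ν := by simp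
        _ ≤ ∫ k₂, (ρ (x*k₁) (y*k₂) + ρ (y*k₂) (z*k₃)) ∂ν := by
            apply integral_mono (integrable_const _) ((int1 (x*k₁) y).add intB2)
            intro k₂; exact htri _ _ _
        _ = (∫ k₂, ρ (x*k₁) (y*k₂) ∂ν) + ∫ k₂, ρ (y*k₂) (z*k₃) ∂ν :=
            integral_add (int1 (x*k₁) y) intB2
    have step2 : ∀ k₁ : G, (∫ k₃, ρ (x*k₁) (z*k₃) ∂ν)
        ≤ (∫ k₂, ρ (x*k₁) (y*k₂) ∂ν) + ∫ k₃, ∫ k₂, ρ (y*k₂) (z*k₃) ∂ν ∂ν := by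
      intro k₁
      calc (∫ k₃, ρ (x*k₁) (z*k₃) ∂ν)
          ≤ ∫ k₃, ((∫ k₂, ρ (x*k₁) (y*k₂) ∂ν) + ∫ k₂, ρ (y*k₂) (z*k₃) ∂ν) ∂ν := by
            apply integral_mono (int1 (x*k₁) z) ((integrable_const _).add intB)
            intro k₃; exact step1 k₁ k₃
        _ = (∫ k₂, ρ (x*k₁) (y*k₂) ∂ν) + ∫ k₃, ∫ k₂, ρ (y*k₂) (z*k₃) ∂ν ∂ν := by
            rw [integral_add (integrable_const _) intB]; simp
    calc (∫ k₁, ∫ k₂, ρ (x*k₁) (z*k₂) ∂ν ∂ν)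
        ≤ ∫ k₁, ((∫ k₂, ρ (x*k₁) (y*k₂) ∂ν) + ∫ k₃, ∫ k₂, ρ (y*k₂) (z*k₃) ∂ν ∂ν) ∂ν := by
          apply integral_mono (intOuter x z) ((intOuter x y).add (integrable_const _))
          intro k₁; exact step2 k₁
      _ = (∫ k₁, ∫ k₂, ρ (x*k₁) (y*k₂) ∂ν ∂ν) + ∫ k₃, ∫ k₂, ρ (y*k₂) (z*k₃) ∂ν ∂ν := by
          rw [integral_add (intOuter x y) (integrable_const _)]; simp
      _ = (∫ k₁, ∫ k₂, ρ (x*k₁) (y*k₂) ∂ν ∂ν) + ∫ k₁, ∫ k₂, ρ (y*k₁) (z*k₂) ∂ν ∂ν := by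
          rw [hBint]
  refine ⟨⟨⟨fun x y => ρKnn x y, fun x y => hsymK x y, fun x y z => htriK x y z⟩,
      ?_, ?_, ?_, ⟨H, ⟨Hcl, F, hFc, hHF⟩, ?_⟩⟩, ⟨2*M, fun x y => ?_⟩, ?_⟩
  · -- locally bounded
    intro C hC
    obtain ⟨MC, hMC⟩ := hLB C hC
    exact ⟨MC + 2*M, fun p hp => (keyUB p.1 p.2).trans (by linarith [hMC p hp])⟩
  · -- proper
    intro t ht
    have hsub : {y : G | (∫ k₁, ∫ k₂, ρ (1*k₁) (y*k₂) ∂ν ∂ν) ≤ t}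
        ⊆ {y : G | ρ 1 y ≤ t + 2*M} := by
      intro y hy
      simp only [Set.mem_setOf_eq] at hy ⊢
      linarith [keyLB 1 y]
    exact (hProp (t + 2*M) (by linarith)).of_isClosed_subset isClosed_closure
      (closure_mono hsub)
  · -- asymptotically geodesic
    intro ε hε
    set ε' := min ε 1 with hε'
    have hε'pos : 0 < ε' := lt_min hε one_pos
    have hε'le1 : ε' ≤ 1 := min_le_right _ _
    have hε'leε : ε' ≤ ε := min_le_left _ _
    obtain ⟨s', hs'pos, hs'⟩ := hGeo (ε'/4) (by positivity)
    set S := max s' (16*M/ε') with hSdef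
    have hSpos : 0 < S := lt_of_lt_of_le hs'pos (le_max_left _ _)
    have hS16 : 16*M ≤ ε'*S := by
      have h := le_max_right s' (16*M/ε')
      rw [div_le_iff₀ hε'pos] at h
      rw [hSdef]; linarith
    refine ⟨max (2*S + 2*M) (12*M/ε' + 2*M),
      lt_of_lt_of_le (by linarith) (le_max_left _ _), ?_⟩
    intro x y
    by_cases hxy : ρ x y ≤ 12*M/ε'
    · refine ⟨1, fun i => if i = 0 then x else y, by norm_num, by norm_num, ?_, ?_⟩
      · intro i hi
        interval_cases i
        refine le_trans ?_ (le_max_right (2*S + 2*M) (12*M/ε' + 2*M))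
        norm_num
        linarith [keyUB x y]
      · rw [Finset.sum_range_one]
        norm_num
        nlinarith [ρKnn x y, hε.le]
    · push_neg at hxy
      have hTr : 12*M < ε' * ρ x y := by rw [div_lt_iff₀ hε'pos] at hxy; linarith
      have hT0 : (0:ℝ) ≤ 12*M/ε' := by positivity
      have hrpos : 0 < ρ x y := by linarith
      obtain ⟨n, c, hc0, hcn, hcstep, hcsum⟩ := hs' x y
      obtain ⟨m, d, hd0, hdm, hdstep, hdsum⟩ :=
        coarsen_aux ρ (fun a b => ∫ k₁, ∫ k₂, ρ (a*k₁) (b*k₂) ∂ν ∂ν) (2*M) S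
          (by linarith) hSpos hnn htri (fun a b => keyUB a b) n c
          (fun i hi => (hcstep i hi).trans (le_max_left _ _))
      refine ⟨m, d, by rw [hd0, hc0], by rw [hdm, hcn], ?_, ?_⟩
      · intro j hj
        exact (hdstep j hj).trans ((by linarith : 2*S + 2*M ≤ 2*S + 2*M).trans
          (le_max_left _ _))
      · have hLnn : (0:ℝ) ≤ ∑ i ∈ Finset.range n, ρ (c i) (c (i + 1)) :=
          Finset.sum_nonneg fun i _ => hnn _ _
        have hkLB := keyLB x y
        have hρKnn := ρKnn x y
        set Ssum := ∑ j ∈ Finset.range m,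
          (fun a b => ∫ k₁, ∫ k₂, ρ (a*k₁) (b*k₂) ∂ν ∂ν) (d j) (d (j+1)) with hSsum
        set L := ∑ i ∈ Finset.range n, ρ (c i) (c (i + 1)) with hLdef
        -- hdsum : Ssum * S ≤ (L + 2M)*S + 2M*L ; want Ssum ≤ (1+ε) ρK x y
        have h1 : Ssum * S ≤ (1+ε') * (ρ x y - 2*M) * S := by
          nlinarith [mul_le_mul_of_nonneg_right hcsum hSpos.le,
            mul_le_mul_of_nonneg_left hcsum (by linarith : (0:ℝ) ≤ 2*M),
            mul_lt_mul_of_pos_right hTr hSpos,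
            mul_le_mul_of_nonneg_right hS16 hrpos.le,
            mul_nonneg hM0 hrpos.le, mul_nonneg hM0 hSpos.le,
            mul_nonneg (mul_nonneg hε'pos.le hM0) hrpos.le]
        have h2 : Ssum ≤ (1+ε') * (ρ x y - 2*M) := le_of_mul_le_mul_right h1 hSpos
        have h3 : (1+ε') * (ρ x y - 2*M)
            ≤ (1+ε') * ∫ k₁, ∫ k₂, ρ (x*k₁) (y*k₂) ∂ν ∂ν :=
          mul_le_mul_of_nonneg_left hkLB (by linarith)
        have h4 : (1+ε') * (∫ k₁, ∫ k₂, ρ (x*k₁) (y*k₂) ∂ν ∂ν)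
            ≤ (1+ε) * ∫ k₁, ∫ k₂, ρ (x*k₁) (y*k₂) ∂ν ∂ν := by nlinarith
        show Ssum ≤ (1+ε) * ∫ k₁, ∫ k₂, ρ (x*k₁) (y*k₂) ∂ν ∂ν
        calc Ssum ≤ (1+ε') * (ρ x y - 2*M) := h2
          _ ≤ _ := h3.trans h4
  · -- invariance
    intro h hh x y
    exact congrArg (integral ν) (funext fun k₁ => congrArg (integral ν) (funext fun k₂ => by
      rw [mul_assoc, mul_assoc]; exact hHinv h hh _ _))
  · -- bounded distance
    rw [abs_le]
    constructor
    · linarith [keyLB x y]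
    · linarith [keyUB x y]
  · -- ratio
    intro ε hε
    refine ⟨closure {y : G | ρ 1 y ≤ max (2*M/ε) 1},
      hProp _ (lt_of_lt_of_le one_pos (le_max_right _ _)), ?_⟩
    intro x hx
    have hr : max (2*M/ε) 1 < ρ 1 x := by
      by_contra h
      push_neg at h
      exact hx (subset_closure h)
    have hrpos : 0 < ρ 1 x := lt_of_lt_of_le (lt_of_lt_of_le one_pos (le_max_right (2*M/ε) 1)) hr.le
    have h2M : 2*M ≤ ε * ρ 1 x := by
      have h1 := le_max_left (2*M/ε) 1
      rw [div_le_iff₀ hε] at h1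
      nlinarith [hr, hε]
    have hk1 := keyUB 1 x
    have hk2 := keyLB 1 x
    rw [abs_le]
    constructor
    · have hle : (1-ε) * ρ 1 x ≤ ∫ k₁, ∫ k₂, ρ (1*k₁) (x*k₂) ∂ν ∂ν := by nlinarith
      have := (le_div_iff₀ hrpos).2 hle
      linarith
    · have hle : (∫ k₁, ∫ k₂, ρ (1*k₁) (x*k₂) ∂ν ∂ν) ≤ (1+ε) * ρ 1 x := by nlinarith
      have := (div_le_iff₀ hrpos).2 hle
      linarith
end

section
/- Let G be a locally compact group with left Haar measure vol_G and H a closed subgroup of G with left Haar measure vol_H. Let Ω_H be a compact subset of H and let K be a compact neighborhood of the identity in G. Then for every n ≥ 1: vol_G(K) · vol_H(Ω_H^n) ≤ vol_H(KK⁻¹ ∩ H) · vol_G(Ω_H^n · K), where Ω_H^n is the n-fold product set of Ω_H, KK⁻¹ = {k₁k₂⁻¹ : k₁,k₂ ∈ K}, and Ω_H^n · K = {ωk : ω ∈ Ω_H^n, k ∈ K}. -/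
open MeasureTheory Filter Topology Pointwise Set
open scoped ENNReal NNReal

section Aux

variable {G : Type*} [Group G] [TopologicalSpace G] [IsTopologicalGroup G]

/-- Multiplying a closure on the left stays within the closure of the product. -/
lemma closure_mul_subset_closure_mul (X Y : Set G) : closure X * Y ⊆ closure (X * Y) := by
  rintro _ ⟨x, hx, y, hy, rfl⟩
  have h1 : (· * y) '' closure X ⊆ closure ((· * y) '' X) :=
    image_closure_subset_closure_image (continuous_mul_right y)
  have h2 : (· * y) '' X ⊆ X * Y := by
    rintro _ ⟨x', hx', rfl⟩
    exact mul_mem_mul hx' hy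
  exact closure_mono h2 (h1 ⟨x, hx, rfl⟩)

/-- Given a compact set `K` and an open set `W ⊇ K * K⁻¹`, there is an open `U ⊇ K` with
`U * U⁻¹ ⊆ W`. -/
lemma exists_isOpen_mul_inv_subset [LocallyCompactSpace G]
    {K W : Set G} (hK : IsCompact K) (hW : IsOpen W) (hKW : K * K⁻¹ ⊆ W) :
    ∃ U : Set G, IsOpen U ∧ K ⊆ U ∧ U * U⁻¹ ⊆ W := by
  obtain ⟨V₂, hV₂, hQV₂⟩ :=
    compact_open_separated_mul_right (hK.mul hK.inv) hW hKW
  obtain ⟨K₂, hK₂mem, hK₂V₂, hK₂comp⟩ := local_compact_nhds (x := (1 : G)) hV₂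
  have hQ₂W : K * K⁻¹ * K₂ ⊆ W := fun x hx => by
    obtain ⟨a, ha, b, hb, rfl⟩ := hx
    exact hQV₂ (mul_mem_mul ha (hK₂V₂ hb))
  obtain ⟨V₁, hV₁, hV₁Q₂⟩ :=
    compact_open_separated_mul_left ((hK.mul hK.inv).mul hK₂comp) hW hQ₂W
  set V : Set G := interior V₁ ∩ (interior K₂)⁻¹ with hV_def
  have hVopen : IsOpen V := isOpen_interior.inter isOpen_interior.inv
  have h1V : (1 : G) ∈ V := by
    constructor
    · exact mem_interior_iff_mem_nhds.2 hV₁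
    · simpa using mem_interior_iff_mem_nhds.2 hK₂mem
  refine ⟨V * K, hVopen.mul_right, fun k hk => ⟨1, h1V, k, hk, one_mul k⟩, ?_⟩
  rintro _ ⟨_, ⟨v, hv, k, hk, rfl⟩, b, hbmem, rfl⟩
  rw [Set.mem_inv] at hbmem
  obtain ⟨v', hv', k', hk', hb⟩ := hbmem
  have hb' : b = k'⁻¹ * v'⁻¹ := by
    have hbb : v' * k' = b⁻¹ := hb
    rw [← inv_inv b, ← hbb, mul_inv_rev]
  show v * k * b ∈ W
  have hx : v * k * b = v * (k * k'⁻¹ * v'⁻¹) := by rw [hb']; group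
  rw [hx]
  apply hV₁Q₂
  refine mul_mem_mul (interior_subset hv.1) ?_
  refine mul_mem_mul (mul_mem_mul hk (Set.inv_mem_inv.2 hk')) ?_
  exact interior_subset hv'.2

end Aux

section Main

variable {G : Type*} [Group G] [TopologicalSpace G] [IsTopologicalGroup G] [LocallyCompactSpace G]
    [MeasurableSpace G] [BorelSpace G]

/-- The main volume-comparison inequality, for regular Haar measures. -/
theorem haar_volume_comparison_regular
    (μ : Measure G) [μ.IsHaarMeasure] [μ.Regular]
    (H : Subgroup G) (hclosed : IsClosed (H : Set G)) [LocallyCompactSpace H]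
    (ν : Measure H) [ν.IsHaarMeasure] [ν.Regular]
    (A : Set H) (hA : IsCompact A)
    (K : Set G) (hK : IsCompact K) (hKnhd : K ∈ nhds (1 : G)) :
    μ K * ν A ≤
      ν ((Subtype.val : H → G) ⁻¹' (K * K⁻¹)) *
        μ (((Subtype.val : H → G) '' A) * K) := by
  haveI : BorelSpace H := Subtype.borelSpace (H : Set G)
  have hemb : Topology.IsClosedEmbedding (Subtype.val : H → G) :=
    Topology.IsClosedEmbedding.subtypeVal hclosed
  set e : H → G := Subtype.val with he
  set T : Set H := e ⁻¹' (K * K⁻¹) with hT_def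
  set S : Set G := (e '' A) * K with hS_def
  have hT : IsCompact T := hemb.isCompact_preimage (hK.mul hK.inv)
  have hS : IsCompact S := (hA.image continuous_subtype_val).mul hK
  have hTfin : ν T ≠ ⊤ := hT.measure_lt_top.ne
  have hSfin : μ S ≠ ⊤ := hS.measure_lt_top.ne
  have h1K : (1 : G) ∈ K := mem_of_mem_nhds hKnhd
  -- the key estimate, with an ε of room
  have key : ∀ δ : ℝ≥0∞, 0 < δ → δ ≠ ⊤ → μ K * ν A ≤ (ν T + δ) * (μ S + δ) := by
    intro δ hδ hδtop
    -- outer regularity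
    obtain ⟨V, hTV, hVopen, hVlt⟩ :=
      Set.exists_isOpen_lt_add (closure T) (by rwa [hT.measure_closure]) hδ.ne'
    obtain ⟨O, hSO, hOopen, hOlt⟩ :=
      Set.exists_isOpen_lt_add (closure S) (by rwa [hS.measure_closure]) hδ.ne'
    rw [hT.measure_closure] at hVlt
    rw [hS.measure_closure] at hOlt
    have hSclO : closure S ⊆ O := hSO
    -- lift V to an open set of G
    obtain ⟨V', hV'open, hV'pre⟩ := isOpen_induced_iff.1 hVopen
    set W : Set G := V' ∪ (↑H)ᶜ with hW_def
    have hWopen : IsOpen W := hV'open.union hclosed.isOpen_compl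
    have hKKW : K * K⁻¹ ⊆ W := by
      intro x hx
      by_cases hxH : x ∈ H
      · left
        have : (⟨x, hxH⟩ : H) ∈ V := hTV (subset_closure hx)
        rwa [← hV'pre] at this
      · exact Or.inr hxH
    obtain ⟨U, hUopen, hKU, hUW⟩ := exists_isOpen_mul_inv_subset hK hWopen hKKW
    have hUV : e ⁻¹' (U * U⁻¹) ⊆ V := by
      intro h hh
      have hW' : e h ∈ W := hUW hh
      rcases hW' with h' | h'
      · rw [← hV'pre]; exact h'
      · exact absurd h.2 h'
    -- Urysohn functions
    obtain ⟨f, hf1, hf0, hfc, hfIcc⟩ :=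
      exists_continuous_one_zero_of_isCompact hK hUopen.isClosed_compl
        (disjoint_compl_right_iff_subset.2 hKU)
    obtain ⟨ψ, hψ1, hψ0, hψc, hψIcc⟩ :=
      exists_continuous_one_zero_of_isCompact hS.closure hOopen.isClosed_compl
        (disjoint_compl_right_iff_subset.2 hSclO)
    have hfsupp : Function.support f ⊆ U := fun x hx => by
      by_contra hxU
      exact hx (hf0 hxU)
    have hψsupp : Function.support ψ ⊆ O := fun x hx => by
      by_contra hxO
      exact hx (hψ0 hxO)
    have hclS_supp : closure S ⊆ tsupport ψ :=
      fun x hx => subset_tsupport ψ (by simp [hψ1 hx])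
    have h1f : (1 : G) ∈ tsupport f :=
      subset_tsupport f (by simp [hf1 h1K])
    -- the two-variable function
    set φ : H × G → ℝ := fun p => ψ p.2 * f ((p.1 : G)⁻¹ * p.2) with hφ_def
    have hφcont : Continuous φ := by
      apply (ψ.continuous.comp continuous_snd).mul
      exact f.continuous.comp
        (((continuous_subtype_val.comp continuous_fst).inv).mul continuous_snd)
    have hφsupp : Function.support φ ⊆
        (e ⁻¹' (tsupport ψ * (tsupport f)⁻¹)) ×ˢ (tsupport ψ) := by
      rintro ⟨h, g⟩ hp
      have hne := hp
      rw [Function.mem_support, hφ_def] at hne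
      have h1 : ψ g ≠ 0 := fun h0 => hne (by simp [h0])
      have h2 : f ((h : G)⁻¹ * g) ≠ 0 := fun h0 => hne (by simp [h0])
      constructor
      · show e h ∈ tsupport ψ * (tsupport f)⁻¹
        have : e h = g * ((h : G)⁻¹ * g)⁻¹ := by rw [mul_inv_rev, inv_inv, mul_inv_cancel_left]
        rw [this]
        exact mul_mem_mul (subset_tsupport ψ h1) (Set.inv_mem_inv.2 (subset_tsupport f h2))
      · exact subset_tsupport ψ h1
    set D : Set H := closure (e ⁻¹' (tsupport ψ * (tsupport f)⁻¹)) with hD_def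
    have hDcomp : IsCompact D :=
      (hemb.isCompact_preimage (hψc.mul hfc.inv)).closure
    have hDmeas : MeasurableSet D := isClosed_closure.measurableSet
    have hφHCS : HasCompactSupport φ := by
      apply HasCompactSupport.intro' (hDcomp.prod hψc)
        (isClosed_closure.prod (isClosed_tsupport ψ))
      intro p hp
      by_contra hφp
      exact hp (Set.prod_mono subset_closure (subset_refl _) (hφsupp hφp))
    -- restricted measures
    set ν' : Measure H := ν.restrict D with hν'_def
    set μ' : Measure G := μ.restrict O with hμ'_def
    have hOfin : μ O ≠ ⊤ := by
      have h2 : μ S + δ < ⊤ :=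
        ENNReal.add_lt_top.2 ⟨hSfin.lt_top, hδtop.lt_top⟩
      exact (hOlt.trans h2).ne
    haveI : IsFiniteMeasure ν' := ⟨by
      rw [hν'_def, Measure.restrict_apply_univ]
      exact hDcomp.measure_lt_top⟩
    haveI : IsFiniteMeasure μ' := ⟨by
      rw [hμ'_def, Measure.restrict_apply_univ]
      exact lt_top_iff_ne_top.2 hOfin⟩
    set F : H → G → ℝ≥0∞ := fun h g => ENNReal.ofReal (φ (h, g)) with hF_def
    have hFmeas : AEMeasurable (Function.uncurry F) (ν'.prod μ') := by
      have hsm : StronglyMeasurable φ := hφHCS.stronglyMeasurable_of_prod hφcont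
      exact (ENNReal.measurable_ofReal.comp hsm.measurable).aemeasurable
    have swap : ∫⁻ h, ∫⁻ g, F h g ∂μ' ∂ν' = ∫⁻ g, ∫⁻ h, F h g ∂ν' ∂μ' :=
      lintegral_lintegral_swap hFmeas
    -- membership of translate in closure S
    have hclA_S : ∀ h : H, h ∈ closure A → ∀ k ∈ K, (h : G) * k ∈ closure S := by
      intro h hh k hk
      have h1 : (h : G) ∈ closure (e '' A) :=
        image_closure_subset_closure_image continuous_subtype_val ⟨h, hh, rfl⟩
      have : (h : G) * k ∈ closure (e '' A) * K := mul_mem_mul h1 hk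
      exact closure_mul_subset_closure_mul _ _ this
    -- lower bound
    have lower : μ K * ν A ≤ ∫⁻ h, ∫⁻ g, F h g ∂μ' ∂ν' := by
      have hAD : closure A ⊆ D := by
        intro h hh
        apply subset_closure
        show e h ∈ tsupport ψ * (tsupport f)⁻¹
        have h1 : (h : G) ∈ closure S := by
          simpa using hclA_S h hh 1 h1K
        have : e h = (h : G) * (1 : G)⁻¹ := by simp [e]
        rw [this]
        exact mul_mem_mul (hclS_supp h1) (Set.inv_mem_inv.2 h1f)
      have hpoint : ∀ h : H,
          (closure A).indicator (fun _ => μ K) h ≤ ∫⁻ g, F h g ∂μ' := by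
        intro h
        by_cases hh : h ∈ closure A
        · rw [Set.indicator_of_mem hh]
          set E : Set G := {g | 1 ≤ F h g} with hE_def
          have hEmeas : MeasurableSet E := by
            have hcont : Continuous fun g => φ (h, g) := hφcont.comp (Continuous.prodMk_right h)
            have : Measurable fun g => F h g :=
              ENNReal.measurable_ofReal.comp hcont.measurable
            exact measurableSet_le measurable_const this
          have hsub : (h : G) • K ⊆ E ∩ O := by
            rintro _ ⟨k, hk, rfl⟩
            have hgS : (h : G) * k ∈ closure S := hclA_S h hh k hk
            have hψg : ψ ((h : G) * k) = 1 := hψ1 hgS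
            have hfg : f ((h : G)⁻¹ * ((h : G) * k)) = 1 := by
              rw [inv_mul_cancel_left]; exact hf1 hk
            constructor
            · show (1 : ℝ≥0∞) ≤ F h ((h : G) * k)
              rw [hF_def]
              simp only [hφ_def, hψg, hfg, mul_one, ENNReal.ofReal_one, le_refl]
            · exact hSclO hgS
          calc μ K = μ ((h : G) • K) := (measure_smul μ ((h : G)) K).symm
            _ ≤ μ (E ∩ O) := measure_mono hsub
            _ = μ' E := (Measure.restrict_apply hEmeas).symm
            _ = ∫⁻ g, E.indicator 1 g ∂μ' := by
                rw [lintegral_indicator_one hEmeas]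
            _ ≤ ∫⁻ g, F h g ∂μ' := by
                apply lintegral_mono
                intro g
                by_cases hg : g ∈ E
                · rw [Set.indicator_of_mem hg]; exact hg
                · rw [Set.indicator_of_notMem hg]; exact zero_le
        · rw [Set.indicator_of_notMem hh]; exact zero_le
      calc μ K * ν A = μ K * ν' (closure A) := by
            rw [hν'_def, Measure.restrict_apply' hDmeas,
              Set.inter_eq_self_of_subset_left hAD, hA.measure_closure]
        _ = ∫⁻ h, (closure A).indicator (fun _ => μ K) h ∂ν' := by
            rw [lintegral_indicator_const measurableSet_closure]
        _ ≤ ∫⁻ h, ∫⁻ g, F h g ∂μ' ∂ν' := lintegral_mono hpoint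
    -- upper bound
    have upper : ∫⁻ g, ∫⁻ h, F h g ∂ν' ∂μ' ≤ ν V * μ O := by
      have hbound : ∀ g : G, ∫⁻ h, F h g ∂ν' ≤ ν V := by
        intro g
        set R : Set H := {h : H | (h : G)⁻¹ * g ∈ U} with hR_def
        have hRmeas : MeasurableSet R := by
          have hcont : Continuous fun h : H => (h : G)⁻¹ * g :=
            (continuous_subtype_val.inv).mul continuous_const
          exact (hUopen.preimage hcont).measurableSet
        have hFR : ∀ h : H, F h g ≤ R.indicator (fun _ => (1 : ℝ≥0∞)) h := by
          intro h
          by_cases hhR : h ∈ R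
          · rw [Set.indicator_of_mem hhR]
            rw [hF_def]
            calc ENNReal.ofReal (φ (h, g)) ≤ ENNReal.ofReal 1 := by
                  apply ENNReal.ofReal_le_ofReal
                  exact mul_le_one₀ (hψIcc g).2 (hfIcc _).1 (hfIcc _).2
              _ = 1 := ENNReal.ofReal_one
          · rw [Set.indicator_of_notMem hhR]
            have hf0' : f ((h : G)⁻¹ * g) = 0 := by
              by_contra hne
              exact hhR (hfsupp hne)
            simp [hF_def, hφ_def, hf0']
        calc ∫⁻ h, F h g ∂ν' ≤ ∫⁻ h, R.indicator (fun _ => (1 : ℝ≥0∞)) h ∂ν' :=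
              lintegral_mono hFR
          _ = ν' R := lintegral_indicator_one hRmeas
          _ ≤ ν R := Measure.restrict_le_self _
          _ ≤ ν V := by
              rcases Set.eq_empty_or_nonempty R with hRe | ⟨h₀, hh₀⟩
              · simp [hRe]
              · have hRsub : R ⊆ h₀ • V := by
                  intro h hh
                  have hmem : h₀⁻¹ * h ∈ e ⁻¹' (U * U⁻¹) := by
                    show ((h₀⁻¹ * h : H) : G) ∈ U * U⁻¹
                    have heq : ((h₀ : G)⁻¹ * g) * ((h : G)⁻¹ * g)⁻¹
                        = ((h₀⁻¹ * h : H) : G) := by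
                      push_cast
                      group
                    rw [← heq]
                    exact mul_mem_mul hh₀ (Set.inv_mem_inv.2 hh)
                  exact ⟨h₀⁻¹ * h, hUV hmem, by show h₀ • (h₀⁻¹ * h) = h; rw [smul_eq_mul, mul_inv_cancel_left]⟩
                calc ν R ≤ ν (h₀ • V) := measure_mono hRsub
                  _ = ν V := measure_smul ν h₀ V
      calc ∫⁻ g, ∫⁻ h, F h g ∂ν' ∂μ' ≤ ∫⁻ _, ν V ∂μ' := lintegral_mono hbound
        _ = ν V * μ O := by rw [lintegral_const, hμ'_def, Measure.restrict_apply_univ]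
    calc μ K * ν A ≤ ∫⁻ h, ∫⁻ g, F h g ∂μ' ∂ν' := lower
      _ = ∫⁻ g, ∫⁻ h, F h g ∂ν' ∂μ' := swap
      _ ≤ ν V * μ O := upper
      _ ≤ (ν T + δ) * (μ S + δ) := mul_le_mul' hVlt.le hOlt.le
  -- conclude from the ε-estimate
  apply ENNReal.le_of_forall_pos_le_add
  intro ε hε _
  set M : ℝ≥0∞ := ν T + μ S + 1 with hM_def
  have hM0 : M ≠ 0 := by simp [hM_def]
  have hMtop : M ≠ ⊤ := by
    simp [hM_def, ENNReal.add_ne_top, hTfin, hSfin]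
  set δ : ℝ≥0∞ := min 1 ((ε : ℝ≥0∞) / M) with hδ_def
  have hδ0 : 0 < δ := by
    apply lt_min one_pos
    exact ENNReal.div_pos (by exact_mod_cast hε.ne') hMtop
  have hδtop : δ ≠ ⊤ := by
    simp [hδ_def]
  have hδ1 : δ ≤ 1 := min_le_left _ _
  have hδε : δ ≤ (ε : ℝ≥0∞) / M := min_le_right _ _
  have hexp : (ν T + δ) * (μ S + δ) ≤ ν T * μ S + ε := by
    have h1 : (ν T + δ) * (μ S + δ) = ν T * μ S + δ * (μ S + ν T + δ) := by ring
    rw [h1]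
    apply add_le_add_right
    calc δ * (μ S + ν T + δ) ≤ ((ε : ℝ≥0∞) / M) * M := by
          apply mul_le_mul' hδε
          rw [hM_def]
          calc μ S + ν T + δ ≤ μ S + ν T + 1 := add_le_add_right hδ1 _
            _ = ν T + μ S + 1 := by ring
      _ = ε := ENNReal.div_mul_cancel hM0 hMtop
  exact (key δ hδ0 hδtop).trans hexp

end Main

/-- `ΩH ^ n` is compact. -/
lemma isCompact_pow {G : Type*} [Monoid G] [TopologicalSpace G] [ContinuousMul G]
    {s : Set G} (hs : IsCompact s) : ∀ n : ℕ, 1 ≤ n → IsCompact (s ^ n) := by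
  intro n hn
  induction n with
  | zero => omega
  | succ k ih =>
    rcases Nat.eq_or_lt_of_le hn with h | h
    · rw [← h]; simpa using hs
    · rw [pow_succ]
      exact (ih (by omega)).mul hs

/-- **Guivarc'h's volume comparison inequality** (from the proof of Lemma 7.9). Let `G` be a
locally compact group with left Haar measure `μ`, `H` a closed subgroup with left Haar
measure `ν`, `Ω_H` a compact subset of `H` and `K` a compact neighborhood of the identity in
`G`. Then `μ(K) · ν(Ω_H^n) ≤ ν(KK⁻¹ ∩ H) · μ(Ω_H^n · K)` for every `n ≥ 1`. -/
theorem haar_volume_comparison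
    {G : Type*} [Group G] [TopologicalSpace G] [IsTopologicalGroup G] [LocallyCompactSpace G]
    [MeasurableSpace G] [BorelSpace G]
    (μ : Measure G) [μ.IsHaarMeasure]
    (H : Subgroup G) (hclosed : IsClosed (H : Set G))
    (ν : Measure H) [ν.IsHaarMeasure]
    (ΩH : Set H) (hΩH : IsCompact ΩH)
    (K : Set G) (hK : IsCompact K) (hKnhd : K ∈ nhds (1 : G))
    (n : ℕ) (hn : 1 ≤ n) :
    μ K * ν (ΩH ^ n) ≤
      ν ((Subtype.val : H → G) ⁻¹' (K * K⁻¹)) *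
        μ (((Subtype.val : H → G) '' (ΩH ^ n)) * K) := by
  classical
  haveI : BorelSpace H := Subtype.borelSpace (H : Set G)
  have hemb : Topology.IsClosedEmbedding (Subtype.val : H → G) :=
    Topology.IsClosedEmbedding.subtypeVal hclosed
  -- `H` is locally compact
  haveI : LocallyCompactSpace H := by
    have hKH : IsCompact ((Subtype.val : H → G) ⁻¹' K) := hemb.isCompact_preimage hK
    have hKHnhds : (Subtype.val : H → G) ⁻¹' K ∈ nhds (1 : H) := by
      apply ContinuousAt.preimage_mem_nhds continuous_subtype_val.continuousAt
      simpa using hKnhd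
    exact hKH.locallyCompactSpace_of_mem_nhds_of_group hKHnhds
  set A : Set H := ΩH ^ n with hA_def
  have hA : IsCompact A := isCompact_pow hΩH n hn
  set T : Set H := (Subtype.val : H → G) ⁻¹' (K * K⁻¹) with hT_def
  set S : Set G := ((Subtype.val : H → G) '' A) * K with hS_def
  have hT : IsCompact T := hemb.isCompact_preimage (hK.mul hK.inv)
  have hS : IsCompact S := (hA.image continuous_subtype_val).mul hK
  -- canonical regular Haar measures
  set μ₀ : Measure G := Measure.haar with hμ₀_def
  set ν₀ : Measure H := Measure.haar with hν₀_def
  have key := haar_volume_comparison_regular μ₀ H hclosed ν₀ A hA K hK hKnhd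
  set c : ℝ≥0 := Measure.haarScalarFactor μ μ₀ with hc_def
  set d : ℝ≥0 := Measure.haarScalarFactor ν ν₀ with hd_def
  have hμK : μ K = (c : ℝ≥0∞) * μ₀ K := by
    simpa using Measure.measure_isMulInvariant_eq_smul_of_isCompact_closure μ μ₀ hK.closure
  have hμS : μ S = (c : ℝ≥0∞) * μ₀ S := by
    simpa using Measure.measure_isMulInvariant_eq_smul_of_isCompact_closure μ μ₀ hS.closure
  have hνA : ν A = (d : ℝ≥0∞) * ν₀ A := by
    simpa using Measure.measure_isMulInvariant_eq_smul_of_isCompact_closure ν ν₀ hA.closure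
  have hνT : ν T = (d : ℝ≥0∞) * ν₀ T := by
    simpa using Measure.measure_isMulInvariant_eq_smul_of_isCompact_closure ν ν₀ hT.closure
  calc μ K * ν A = ((c : ℝ≥0∞) * (d : ℝ≥0∞)) * (μ₀ K * ν₀ A) := by
        rw [hμK, hνA]; ring
    _ ≤ ((c : ℝ≥0∞) * (d : ℝ≥0∞)) * (ν₀ T * μ₀ S) := mul_le_mul_right key _
    _ = ν T * μ S := by rw [hνT, hμS]; ring
end

section
/- Let G be a noncompact locally compact group, H a closed co-compact subgroup of G, and ρ an H-periodic pseudodistance on G (i.e. ρ is locally bounded, proper, asymptotically geodesic, and ρ(hx,hy) = ρ(x,y) for all h ∈ H, x,y ∈ G). Let V be a finite-dimensional real normed vector space and π₁ : G → V a continuous group homomorphism into the additive group of V. Define E to be the closed convex hull of {π₁(h)/ρ(e,h) : h ∈ H, ρ(e,h) > 0}, and for s > 0 define E_s to be the closed convex hull of {π₁(x)/ρ(e,x) : x ∈ G, ρ(e,x) > s}. Then E = ⋂_{s>0} E_s. -/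
open MeasureTheory Filter Topology Pointwise

open Pointwise

lemma aux_arch (a b c : ℝ) (hb : 0 ≤ b)
    (h : ∀ n : ℕ, 1 ≤ n → (n : ℝ) * a ≤ (n : ℝ) * c + b) : a ≤ c := by
  by_contra hlt
  push_neg at hlt
  obtain ⟨n, hn⟩ := exists_nat_gt (b / (a - c))
  have hac : 0 < a - c := by linarith
  have hn1 : 1 ≤ n := by
    by_contra h0
    push_neg at h0
    interval_cases n
    · simp only [Nat.cast_zero] at hn
      have : 0 ≤ b / (a - c) := div_nonneg hb hac.le
      linarith
  have hb' : b < (n : ℝ) * (a - c) := by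
    rw [div_lt_iff₀ hac] at hn
    linarith
  have := h n hn1
  nlinarith

lemma aux_chain_le {G : Type*} (ρ : G → G → ℝ)
    (htri : ∀ x y z : G, ρ x z ≤ ρ x y + ρ y z) (c : ℕ → G) :
    ∀ j : ℕ, ρ (c 0) (c (j + 1)) ≤ ∑ i ∈ Finset.range (j + 1), ρ (c i) (c (i + 1)) := by
  intro j
  induction j with
  | zero => simp
  | succ k ih =>
      calc ρ (c 0) (c (k + 2)) ≤ ρ (c 0) (c (k + 1)) + ρ (c (k + 1)) (c (k + 2)) :=
            htri _ _ _
        _ ≤ (∑ i ∈ Finset.range (k + 1), ρ (c i) (c (i + 1))) + ρ (c (k + 1)) (c (k + 2)) := by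
            linarith
        _ = ∑ i ∈ Finset.range (k + 2), ρ (c i) (c (i + 1)) := by
            rw [Finset.sum_range_succ (fun i => ρ (c i) (c (i + 1))) (k+1)]

lemma aux_sum_mem_convex {V : Type*} [AddCommGroup V] [Module ℝ V]
    (C : Set V) (hC : Convex ℝ C) (h0 : (0 : V) ∈ C) (m : ℕ) (lam : ℕ → ℝ) (u : ℕ → V)
    (hl : ∀ i < m, 0 ≤ lam i) (hu : ∀ i < m, u i ∈ C)
    (hsum : ∑ i ∈ Finset.range m, lam i ≤ 1) :
    ∑ i ∈ Finset.range m, lam i • u i ∈ C := by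
  set w : ℕ → ℝ := fun i => if i = m then 1 - ∑ i ∈ Finset.range m, lam i else lam i with hw
  set z : ℕ → V := fun i => if i = m then 0 else u i with hz
  have key : ∑ i ∈ Finset.range (m + 1), w i • z i ∈ C := by
    apply hC.sum_mem
    · intro i hi
      rcases Finset.mem_range.mp hi with hi'
      by_cases h : i = m
      · simp [hw, h]; linarith
      · have him : i < m := by omega
        simp [hw, h]; exact hl i him
    · rw [Finset.sum_range_succ]
      have : ∑ i ∈ Finset.range m, w i = ∑ i ∈ Finset.range m, lam i := by
        apply Finset.sum_congr rfl
        intro i hi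
        have : i ≠ m := by have := Finset.mem_range.mp hi; omega
        simp [hw, this]
      rw [this]
      simp [hw]
    · intro i hi
      by_cases h : i = m
      · simp [hz, h]; exact h0
      · simp [hz, h]; exact hu i (by have := Finset.mem_range.mp hi; omega)
  have heq : ∑ i ∈ Finset.range (m + 1), w i • z i = ∑ i ∈ Finset.range m, lam i • u i := by
    rw [Finset.sum_range_succ]
    have : ∑ i ∈ Finset.range m, w i • z i = ∑ i ∈ Finset.range m, lam i • u i := by
      apply Finset.sum_congr rfl
      intro i hi
      have : i ≠ m := by have := Finset.mem_range.mp hi; omega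
      simp [hw, hz, this]
    rw [this]
    simp [hw, hz]
  rwa [heq] at key


lemma aux_coarsen {G : Type*} (ρ : G → G → ℝ)
    (hnn : ∀ x y : G, 0 ≤ ρ x y)
    (htri : ∀ x y z : G, ρ x z ≤ ρ x y + ρ y z)
    (S : ℝ) (hS : 0 < S) :
    ∀ n : ℕ, ∀ c : ℕ → G, (∀ i < n, ρ (c i) (c (i + 1)) ≤ S) →
      ∃ m : ℕ, ∃ c' : ℕ → G, c' 0 = c 0 ∧ c' m = c n ∧
        (∀ i < m, ρ (c' i) (c' (i + 1)) ≤ 2 * S) ∧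
        (∑ i ∈ Finset.range m, ρ (c' i) (c' (i + 1)) ≤
          ∑ i ∈ Finset.range n, ρ (c i) (c (i + 1))) ∧
        (m : ℝ) * S ≤ (∑ i ∈ Finset.range n, ρ (c i) (c (i + 1))) + S := by
  intro n
  induction n using Nat.strong_induction_on with
  | _ n ih =>
  intro c hc
  by_cases h0 : n = 0
  · subst h0
    refine ⟨0, c, rfl, rfl, fun i hi => absurd hi (by omega), le_refl _, ?_⟩
    have : 0 ≤ ∑ i ∈ Finset.range 0, ρ (c i) (c (i + 1)) := Finset.sum_nonneg fun i _ => hnn _ _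
    push_cast
    linarith
  · set T := ∑ i ∈ Finset.range n, ρ (c i) (c (i + 1)) with hT
    have hT0 : 0 ≤ T := Finset.sum_nonneg fun i _ => hnn _ _
    obtain ⟨k₀, rfl⟩ : ∃ k, n = k + 1 := ⟨n - 1, by omega⟩
    by_cases hcase : T ≤ 2 * S
    · refine ⟨1, fun i => if i = 0 then c 0 else c (k₀ + 1), by simp, by simp, ?_, ?_, ?_⟩
      · intro i hi
        have : i = 0 := by omega
        subst this
        simpa using le_trans (aux_chain_le ρ htri c k₀) hcase
      · simpa using aux_chain_le ρ htri c k₀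
      · simp only [Nat.cast_one, one_mul]
        linarith
    · push_neg at hcase
      have hTS : S < T := by linarith
      set P : ℕ → ℝ := fun j => ∑ i ∈ Finset.range j, ρ (c i) (c (i + 1)) with hP
      have hex : ∃ k, S < P (k + 1) := ⟨k₀, hTS⟩
      set j := Nat.find hex with hjdef
      have hj : S < P (j + 1) := Nat.find_spec hex
      have hjn : j ≤ k₀ := Nat.find_min' hex hTS
      have hPj : P j ≤ S := by
        rcases Nat.eq_zero_or_pos j with hj0 | hjpos
        · rw [hj0]; simpa [hP] using hS.le
        · obtain ⟨k, hk⟩ : ∃ k, j = k + 1 := ⟨j - 1, by omega⟩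
          have hmin := Nat.find_min hex (show k < j by omega)
          push_neg at hmin
          rw [hk]
          exact hmin
      set n' := k₀ + 1 - (j + 1) with hn'def
      have hn'lt : n' < k₀ + 1 := by omega
      set c₂ : ℕ → G := fun i => c (i + (j + 1)) with hc₂
      have hc₂step : ∀ i < n', ρ (c₂ i) (c₂ (i + 1)) ≤ S := by
        intro i hi
        have h2 : i + 1 + (j + 1) = (i + (j + 1)) + 1 := by omega
        simp only [hc₂, h2]
        exact hc _ (by omega)
      obtain ⟨m', d, hd0, hdm, hdstep, hdsum, hdcount⟩ := ih n' hn'lt c₂ hc₂step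
      have hd0' : d 0 = c (j + 1) := by
        rw [hd0]; simp only [hc₂]; rw [Nat.zero_add]
      have hdm' : d m' = c (k₀ + 1) := by
        rw [hdm]; simp only [hc₂]; congr 1; omega
      have hsplit : T = P (j + 1) + ∑ i ∈ Finset.range n', ρ (c₂ i) (c₂ (i + 1)) := by
        have hnn' : k₀ + 1 = (j + 1) + n' := by omega
        rw [hT, hnn', Finset.sum_range_add]
        congr 1
        apply Finset.sum_congr rfl
        intro i _
        have h2 : j + 1 + i + 1 = i + 1 + (j + 1) := by omega
        have h3 : j + 1 + i = i + (j + 1) := by omega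
        simp only [hc₂, h2, h3]
        rw [show i + (j + 1) + 1 = i + 1 + (j + 1) from by omega]
      have hfirst : ρ (c 0) (c (j + 1)) ≤ 2 * S := by
        have h1 : ρ (c 0) (c (j + 1)) ≤ P (j + 1) := aux_chain_le ρ htri c j
        have h2 : P (j + 1) = P j + ρ (c j) (c (j + 1)) := Finset.sum_range_succ _ _
        have h3 : ρ (c j) (c (j + 1)) ≤ S := hc j (by omega)
        linarith
      have hfirstP : ρ (c 0) (c (j + 1)) ≤ P (j + 1) := aux_chain_le ρ htri c j
      refine ⟨m' + 1, fun i => if i = 0 then c 0 else d (i - 1), by simp, ?_, ?_, ?_, ?_⟩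
      · have h5 : m' + 1 ≠ 0 := by omega
        simp only [h5, if_false]
        rw [show m' + 1 - 1 = m' from rfl, hdm']
      · intro i hi
        rcases Nat.eq_zero_or_pos i with hi0 | hipos
        · subst hi0
          have hgoal : ρ (c 0) (d 0) ≤ 2 * S := by rw [hd0']; exact hfirst
          simpa using hgoal
        · obtain ⟨i', rfl⟩ : ∃ i'', i = i'' + 1 := ⟨i - 1, by omega⟩
          simp only [if_neg (by omega : i' + 1 ≠ 0), if_neg (by omega : i' + 1 + 1 ≠ 0)]
          rw [show i' + 1 - 1 = i' from rfl, show i' + 1 + 1 - 1 = i' + 1 from rfl]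
          exact hdstep i' (by omega)
      · rw [Finset.sum_range_succ' (fun i => ρ ((fun i => if i = 0 then c 0 else d (i - 1)) i)
          ((fun i => if i = 0 then c 0 else d (i - 1)) (i + 1))) m']
        have hsum1 : ∑ i ∈ Finset.range m',
            ρ (if i + 1 = 0 then c 0 else d (i + 1 - 1))
              (if i + 1 + 1 = 0 then c 0 else d (i + 1 + 1 - 1)) =
            ∑ i ∈ Finset.range m', ρ (d i) (d (i + 1)) := by
          apply Finset.sum_congr rfl
          intro i _
          simp only [if_neg (by omega : i + 1 ≠ 0), if_neg (by omega : i + 1 + 1 ≠ 0)]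
          rfl
        rw [hsum1]
        have hterm : ρ (if (0:ℕ) = 0 then c 0 else d (0 - 1))
            (if (0:ℕ) + 1 = 0 then c 0 else d ((0:ℕ) + 1 - 1)) = ρ (c 0) (c (j + 1)) := by
          simp [hd0']
        rw [hterm, hsplit]
        linarith
      · push_cast
        have h1 : ((m' : ℝ)) * S ≤ (∑ i ∈ Finset.range n', ρ (c₂ i) (c₂ (i + 1))) + S := hdcount
        rw [hsplit]
        nlinarith [hj]
set_option maxHeartbeats 1000000 in
/-- **The limit unit ball as an intersection over spheres** (Proposition 6.1). Let `G` be a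
noncompact locally compact group, `H` a closed co-compact subgroup and `ρ` an `H`-periodic
pseudodistance on `G`. Let `π₁ : G → V` be a continuous homomorphism to a finite-dimensional
real normed vector space. Let `E` be the closed convex hull of the points `π₁(h)/ρ(e,h)` for
`h ∈ H` with `ρ(e,h) > 0`, and for `s > 0` let `E_s` be the closed convex hull of the points
`π₁(x)/ρ(e,x)` for `x ∈ G` with `ρ(e,x) > s`. Then `E = ⋂_{s>0} E_s`. -/
theorem limit_ball_eq_iInter_spheres
    {G : Type*} [Group G] [TopologicalSpace G] [IsTopologicalGroup G] [LocallyCompactSpace G]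
    [NoncompactSpace G]
    {V : Type*} [NormedAddCommGroup V] [NormedSpace ℝ V] [FiniteDimensional ℝ V]
    (H : Subgroup G) (hclosed : IsClosed (H : Set G))
    (hcocompact : ∃ F : Set G, IsCompact F ∧ (H : Set G) * F = Set.univ)
    (ρ : G → G → ℝ)
    (hρ : IsPseudoDist ρ ∧ IsLocallyBoundedDist ρ ∧ IsProperDist ρ ∧ IsAsympGeodesic ρ)
    (hρinv : ∀ h ∈ H, ∀ x y : G, ρ (h * x) (h * y) = ρ x y)
    (π₁ : G → V) (hcont : Continuous π₁)
    (hhom : ∀ x y : G, π₁ (x * y) = π₁ x + π₁ y) :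
    closure (convexHull ℝ
        {w : V | ∃ h ∈ H, 0 < ρ 1 h ∧ w = (ρ 1 h)⁻¹ • π₁ h}) =
      ⋂ (s : ℝ) (_ : 0 < s),
        closure (convexHull ℝ
          {w : V | ∃ x : G, s < ρ 1 x ∧ w = (ρ 1 x)⁻¹ • π₁ x}) := by
  obtain ⟨F, hFcomp, hHF⟩ := hcocompact
  obtain ⟨⟨hnn, hsymm, htri⟩, hlb, hproper, hgeo⟩ := hρ
  -- basic homomorphism facts
  have pi1 : π₁ (1 : G) = 0 := by
    have h2 := hhom 1 1
    rw [one_mul] at h2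
    nth_rewrite 1 [← add_zero (π₁ 1)] at h2
    exact (add_left_cancel h2).symm
  have pinv : ∀ a : G, π₁ a⁻¹ = -π₁ a := by
    intro a
    have h2 : π₁ a + π₁ a⁻¹ = 0 := by rw [← hhom]; simp [pi1]
    exact eq_neg_of_add_eq_zero_right h2
  have ppow : ∀ (a : G) (n : ℕ), π₁ (a ^ n) = (n : ℝ) • π₁ a := by
    intro a n
    induction n with
    | zero => simpa using pi1
    | succ k ih =>
        rw [pow_succ, hhom, ih]
        push_cast
        rw [add_smul, one_smul]
  -- invariance facts
  have rmul : ∀ h ∈ H, ∀ g : G, ρ h (h * g) = ρ 1 g := by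
    intro h hh g
    have := hρinv h hh 1 g
    rwa [mul_one] at this
  have rH : ∀ h ∈ H, ∀ g : G, ρ 1 (h⁻¹ * g) = ρ h g := by
    intro h hh g
    have := hρinv h hh 1 (h⁻¹ * g)
    rw [mul_one, mul_inv_cancel_left] at this
    exact this.symm
  have rinv : ∀ h ∈ H, ρ 1 h⁻¹ = ρ 1 h := by
    intro h hh
    have h1 := rH h hh 1
    rw [mul_one] at h1
    rw [h1, hsymm]
  have rpow : ∀ h ∈ H, ∀ n : ℕ, 1 ≤ n → ρ 1 (h ^ n) ≤ (n : ℝ) * ρ 1 h := by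
    intro h hh n hn
    induction n, hn using Nat.le_induction with
    | base => simp
    | succ k hk ih =>
        have h2 : ρ 1 (h ^ (k + 1)) ≤ ρ 1 (h ^ k) + ρ (h ^ k) (h ^ (k + 1)) := htri _ _ _
        have h3 : ρ (h ^ k) (h ^ (k + 1)) = ρ 1 h := by
          have := rmul (h ^ k) (pow_mem hh k) h
          rwa [← pow_succ] at this
        push_cast
        push_cast at ih
        linarith
  -- constants
  obtain ⟨Cf, hCf0, hCfF⟩ : ∃ Cf : ℝ, 0 ≤ Cf ∧ ∀ f ∈ F, ρ 1 f ≤ Cf := by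
    obtain ⟨M, hM⟩ := hlb ({1} ×ˢ F) (isCompact_singleton.prod hFcomp)
    refine ⟨max M 0, le_max_right _ _, fun f hf => ?_⟩
    exact le_trans (hM (1, f) (by simp [hf])) (le_max_left _ _)
  have normbd : ∀ K : Set G, IsCompact K → ∃ M : ℝ, 0 ≤ M ∧ ∀ y ∈ K, ‖π₁ y‖ ≤ M := by
    intro K hK
    obtain ⟨M, hM⟩ := (hK.image (continuous_norm.comp hcont)).bddAbove
    refine ⟨max M 0, le_max_right _ _, fun y hy => ?_⟩
    exact le_trans (hM (Set.mem_image_of_mem _ hy)) (le_max_left _ _)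
  obtain ⟨Mf, hMf0, hMfF⟩ := normbd F hFcomp
  have decomp : ∀ x : G, ∃ h f : G, h ∈ H ∧ f ∈ F ∧ x = h * f := by
    intro x
    have hx : x ∈ (H : Set G) * F := by rw [hHF]; trivial
    obtain ⟨a, ha, b, hb, hab⟩ := Set.mem_mul.mp hx
    exact ⟨a, b, ha, hb, hab.symm⟩
  -- the decomposition-into-H-steps lemma
  have decompS : ∀ S : ℝ, ∀ (x : G) (m : ℕ) (c : ℕ → G), c 0 = 1 → c m = x →
      (∀ i < m, ρ (c i) (c (i + 1)) ≤ S) →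
      ∃ g : ℕ → G, (∀ i, g i ∈ H) ∧
        (∀ i < m, ρ 1 (g i) ≤ S + 2 * Cf ∧ ρ 1 (g i) ≤ ρ (c i) (c (i + 1)) + 2 * Cf) ∧
        ‖π₁ x - ∑ i ∈ Finset.range m, π₁ (g i)‖ ≤ 2 * Mf := by
    intro S x m c hc0 hcm hsteps
    choose h f hhH hfF hcf using fun i => decomp (c i)
    refine ⟨fun i => (h i)⁻¹ * h (i + 1),
      fun i => mul_mem (inv_mem (hhH i)) (hhH (i + 1)), ?_, ?_⟩
    · intro i hi
      have hgi : ρ 1 ((h i)⁻¹ * h (i + 1)) = ρ (h i) (h (i + 1)) := rH (h i) (hhH i) (h (i + 1))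
      have h1 : ρ (h i) (c i) = ρ 1 (f i) := by
        conv_lhs => rw [hcf i]
        exact rmul (h i) (hhH i) (f i)
      have h2 : ρ (h (i + 1)) (c (i + 1)) = ρ 1 (f (i + 1)) := by
        conv_lhs => rw [hcf (i + 1)]
        exact rmul (h (i + 1)) (hhH (i + 1)) (f (i + 1))
      have htri1 : ρ (h i) (h (i + 1)) ≤
          ρ (h i) (c i) + ρ (c i) (c (i + 1)) + ρ (c (i + 1)) (h (i + 1)) := by
        have t1 := htri (h i) (c i) (h (i + 1))
        have t2 := htri (c i) (c (i + 1)) (h (i + 1))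
        linarith
      have hs1 : ρ (h i) (c i) ≤ Cf := h1 ▸ hCfF _ (hfF i)
      have hs2 : ρ (c (i + 1)) (h (i + 1)) ≤ Cf := by
        rw [hsymm]; exact h2 ▸ hCfF _ (hfF (i + 1))
      have hstep := hsteps i hi
      constructor
      · rw [hgi]; linarith
      · rw [hgi]; linarith
    · have tel : ∀ k : ℕ,
          ∑ i ∈ Finset.range k, π₁ ((h i)⁻¹ * h (i + 1)) = π₁ (h k) - π₁ (h 0) := by
        intro k
        induction k with
        | zero => simp
        | succ k ih =>
            rw [Finset.sum_range_succ, ih, hhom, pinv]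
            abel
      rw [tel]
      have e1 : π₁ x = π₁ (h m) + π₁ (f m) := by rw [← hhom, ← hcf m, hcm]
      have e0 : π₁ (h 0) + π₁ (f 0) = 0 := by rw [← hhom, ← hcf 0, hc0, pi1]
      have h0' : π₁ (h 0) = -π₁ (f 0) := eq_neg_of_add_eq_zero_left e0
      have heq : π₁ x - (π₁ (h m) - π₁ (h 0)) = π₁ (f m) - π₁ (f 0) := by
        rw [e1, h0']; abel
      rw [heq]
      calc ‖π₁ (f m) - π₁ (f 0)‖ ≤ ‖π₁ (f m)‖ + ‖π₁ (f 0)‖ := norm_sub_le _ _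
        _ ≤ Mf + Mf := add_le_add (hMfF _ (hfF m)) (hMfF _ (hfF 0))
        _ = 2 * Mf := by ring
  -- linear upper bound for the norm of π₁
  obtain ⟨s₁, hs₁, hch₁⟩ := hgeo 1 one_pos
  have ht₁pos : (0:ℝ) < 2 * s₁ + 2 * Cf + 1 := by linarith
  obtain ⟨M₁, hM₁0, hM₁⟩ := normbd (closure {y : G | ρ 1 y ≤ 2 * s₁ + 2 * Cf + 1})
    (hproper _ ht₁pos)
  have lin : ∀ x : G, ‖π₁ x‖ ≤ (2 * M₁ / s₁) * ρ 1 x + (M₁ + 2 * Mf) := by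
    intro x
    obtain ⟨n, c, hc0, hcn, hsteps, htot⟩ := hch₁ 1 x
    obtain ⟨m, c', hc'0, hc'm, hsteps', hsum', hcount'⟩ :=
      aux_coarsen ρ hnn htri s₁ hs₁ n c hsteps
    obtain ⟨g, hgH, hgbd, hgtel⟩ :=
      decompS (2 * s₁) x m c' (hc'0.trans hc0) (hc'm.trans hcn) hsteps'
    have hgnorm : ∀ i < m, ‖π₁ (g i)‖ ≤ M₁ := by
      intro i hi
      apply hM₁
      apply subset_closure
      simp only [Set.mem_setOf_eq]
      have := (hgbd i hi).1
      linarith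
    have hsum_norm : ‖∑ i ∈ Finset.range m, π₁ (g i)‖ ≤ (m : ℝ) * M₁ := by
      calc ‖∑ i ∈ Finset.range m, π₁ (g i)‖ ≤ ∑ i ∈ Finset.range m, ‖π₁ (g i)‖ :=
            norm_sum_le _ _
        _ ≤ ∑ _i ∈ Finset.range m, M₁ :=
            Finset.sum_le_sum (fun i hi => hgnorm i (Finset.mem_range.mp hi))
        _ = (m : ℝ) * M₁ := by rw [Finset.sum_const, Finset.card_range, nsmul_eq_mul]
    have h1 : ‖π₁ x‖ ≤ (m : ℝ) * M₁ + 2 * Mf := by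
      calc ‖π₁ x‖ = ‖(π₁ x - ∑ i ∈ Finset.range m, π₁ (g i)) + ∑ i ∈ Finset.range m, π₁ (g i)‖ := by
            rw [sub_add_cancel]
        _ ≤ ‖π₁ x - ∑ i ∈ Finset.range m, π₁ (g i)‖ + ‖∑ i ∈ Finset.range m, π₁ (g i)‖ :=
            norm_add_le _ _
        _ ≤ 2 * Mf + (m : ℝ) * M₁ := add_le_add hgtel hsum_norm
        _ = (m : ℝ) * M₁ + 2 * Mf := by ring
    have htot' : ∑ i ∈ Finset.range n, ρ (c i) (c (i + 1)) ≤ 2 * ρ 1 x := by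
      have := htot; linarith
    have hm : (m : ℝ) * s₁ ≤ 2 * ρ 1 x + s₁ := le_trans hcount' (by linarith)
    have hmM : (m : ℝ) * M₁ ≤ (2 * ρ 1 x / s₁ + 1) * M₁ := by
      apply mul_le_mul_of_nonneg_right _ hM₁0
      rw [div_add' _ _ _ hs₁.ne', le_div_iff₀ hs₁]
      linarith
    have hfin : (2 * ρ 1 x / s₁ + 1) * M₁ = (2 * M₁ / s₁) * ρ 1 x + M₁ := by
      field_simp
    linarith [hmM, h1, hfin.le, hfin.ge]
  set A := max 1 (2 * M₁ / s₁) with hA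
  clear_value A
  have hA1 : (1:ℝ) ≤ A := hA ▸ le_max_left _ _
  have hA0 : (0:ℝ) < A := lt_of_lt_of_le one_pos hA1
  set B := M₁ + 2 * Mf with hB
  clear_value B
  have hB0 : (0:ℝ) ≤ B := by rw [hB]; linarith
  have lin' : ∀ x : G, ‖π₁ x‖ ≤ A * ρ 1 x + B := by
    intro x
    have h1 := lin x
    have h2 : (2 * M₁ / s₁) * ρ 1 x ≤ A * ρ 1 x :=
      mul_le_mul_of_nonneg_right (hA ▸ le_max_right 1 (2 * M₁ / s₁)) (hnn 1 x)
    rw [hB]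
    linarith
  have linH : ∀ h ∈ H, ‖π₁ h‖ ≤ A * ρ 1 h := by
    intro h hh
    apply aux_arch _ B _ hB0
    intro n hn
    have h1 : ‖π₁ (h ^ n)‖ = (n : ℝ) * ‖π₁ h‖ := by
      rw [ppow, norm_smul, Real.norm_eq_abs, abs_of_nonneg (by positivity : (0:ℝ) ≤ (n:ℝ))]
    have h2 := lin' (h ^ n)
    have h3 := rpow h hh n hn
    have h4 : A * ρ 1 (h ^ n) ≤ A * ((n : ℝ) * ρ 1 h) :=
      mul_le_mul_of_nonneg_left h3 hA0.le
    calc (n : ℝ) * ‖π₁ h‖ = ‖π₁ (h ^ n)‖ := h1.symm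
      _ ≤ A * ρ 1 (h ^ n) + B := h2
      _ ≤ A * ((n : ℝ) * ρ 1 h) + B := by linarith
      _ = (n : ℝ) * (A * ρ 1 h) + B := by ring
  have pzero : ∀ h ∈ H, ∀ t : ℝ, (∀ n : ℕ, 1 ≤ n → ρ 1 (h ^ n) ≤ t) → π₁ h = 0 := by
    intro h hh t hbd
    obtain ⟨M, hM0, hM⟩ := normbd (closure {y : G | ρ 1 y ≤ max t 1})
      (hproper _ (lt_of_lt_of_le one_pos (le_max_right _ _)))
    have keyn : ∀ n : ℕ, 1 ≤ n → (n : ℝ) * ‖π₁ h‖ ≤ (n : ℝ) * 0 + M := by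
      intro n hn
      have h1 : h ^ n ∈ closure {y : G | ρ 1 y ≤ max t 1} := by
        apply subset_closure
        simp only [Set.mem_setOf_eq]
        exact le_trans (hbd n hn) (le_max_left _ _)
      have h2 := hM _ h1
      rw [ppow, norm_smul, Real.norm_eq_abs,
        abs_of_nonneg (by positivity : (0:ℝ) ≤ (n:ℝ))] at h2
      linarith
    have := aux_arch ‖π₁ h‖ M 0 hM0 keyn
    exact norm_le_zero_iff.mp this
  have exlarge : ∀ s : ℝ, ∃ h ∈ H, s < ρ 1 h := by
    intro s
    have hex : ∃ x : G, max (s + Cf) 1 < ρ 1 x := by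
      by_contra hcon
      push_neg at hcon
      have huniv : {y : G | ρ 1 y ≤ max (s + Cf) 1} = Set.univ :=
        Set.eq_univ_of_forall (fun y => hcon y)
      have hcomp := hproper (max (s + Cf) 1) (lt_of_lt_of_le one_pos (le_max_right _ _))
      rw [huniv, closure_univ] at hcomp
      exact noncompact_univ G hcomp
    obtain ⟨x, hx⟩ := hex
    obtain ⟨h, f, hh, hf, rfl⟩ := decomp x
    refine ⟨h, hh, ?_⟩
    have h1 : ρ 1 (h * f) ≤ ρ 1 h + ρ h (h * f) := htri _ _ _
    have h2 : ρ h (h * f) = ρ 1 f := rmul h hh f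
    have h3 := hCfF f hf
    have h4 : s + Cf < ρ 1 (h * f) := lt_of_le_of_lt (le_max_left _ _) hx
    linarith
  have zeroE : (0 : V) ∈ convexHull ℝ {w : V | ∃ h ∈ H, 0 < ρ 1 h ∧ w = (ρ 1 h)⁻¹ • π₁ h} := by
    obtain ⟨h, hh, hph⟩ := exlarge 0
    have hu : (ρ 1 h)⁻¹ • π₁ h ∈ {w : V | ∃ h ∈ H, 0 < ρ 1 h ∧ w = (ρ 1 h)⁻¹ • π₁ h} :=
      ⟨h, hh, hph, rfl⟩
    have hnu : -((ρ 1 h)⁻¹ • π₁ h) ∈ {w : V | ∃ h ∈ H, 0 < ρ 1 h ∧ w = (ρ 1 h)⁻¹ • π₁ h} := by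
      refine ⟨h⁻¹, inv_mem hh, ?_, ?_⟩
      · rw [rinv h hh]; exact hph
      · rw [rinv h hh, pinv, smul_neg]
    have hcomb := (convex_convexHull ℝ _) (subset_convexHull ℝ _ hu) (subset_convexHull ℝ _ hnu)
      (by norm_num : (0:ℝ) ≤ 1/2) (by norm_num : (0:ℝ) ≤ 1/2) (by norm_num)
    simpa using hcomb
  have zeroS : ∀ s : ℝ,
      (0 : V) ∈ convexHull ℝ {w : V | ∃ x : G, s < ρ 1 x ∧ w = (ρ 1 x)⁻¹ • π₁ x} := by
    intro s
    obtain ⟨h, hh, hph⟩ := exlarge s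
    have hu : (ρ 1 h)⁻¹ • π₁ h ∈ {w : V | ∃ x : G, s < ρ 1 x ∧ w = (ρ 1 x)⁻¹ • π₁ x} :=
      ⟨h, hph, rfl⟩
    have hnu : -((ρ 1 h)⁻¹ • π₁ h) ∈ {w : V | ∃ x : G, s < ρ 1 x ∧ w = (ρ 1 x)⁻¹ • π₁ x} := by
      refine ⟨h⁻¹, ?_, ?_⟩
      · rw [rinv h hh]; exact hph
      · rw [rinv h hh, pinv, smul_neg]
    have hcomb := (convex_convexHull ℝ _) (subset_convexHull ℝ _ hu) (subset_convexHull ℝ _ hnu)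
      (by norm_num : (0:ℝ) ≤ 1/2) (by norm_num : (0:ℝ) ≤ 1/2) (by norm_num)
    simpa using hcomb
  -- THE KEY quantitative lemma
  have key : ∀ ε : ℝ, 0 < ε → ∃ s : ℝ, 0 < s ∧ ∀ x : G, s < ρ 1 x →
      ∃ q ∈ convexHull ℝ {w : V | ∃ h ∈ H, 0 < ρ 1 h ∧ w = (ρ 1 h)⁻¹ • π₁ h},
        ‖(ρ 1 x)⁻¹ • π₁ x - q‖ ≤ ε := by
    intro ε hε
    have hεA : (0:ℝ) < ε / (6 * A) := by positivity
    obtain ⟨s₀, hs₀, hch⟩ := hgeo (min 1 (ε / (6 * A))) (lt_min one_pos hεA)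
    set ε' := min 1 (ε / (6 * A)) with hε'def
    clear_value ε'
    have hε'0 : 0 < ε' := hε'def ▸ lt_min one_pos hεA
    have hε'1 : ε' ≤ 1 := hε'def ▸ min_le_left 1 (ε / (6 * A))
    have hε'A : A * ε' ≤ ε / 6 := by
      have h1 : ε' ≤ ε / (6 * A) := hε'def ▸ min_le_right 1 (ε / (6 * A))
      have h2 : A * ε' ≤ A * (ε / (6 * A)) := mul_le_mul_of_nonneg_left h1 hA0.le
      have h3 : A * (ε / (6 * A)) = ε / 6 := by
        field_simp
      linarith
    set S := max s₀ (24 * (Cf + 1) * A / ε) with hSdef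
    clear_value S
    have hSs₀ : s₀ ≤ S := hSdef ▸ le_max_left s₀ (24 * (Cf + 1) * A / ε)
    have hSpos : 0 < S := lt_of_lt_of_le hs₀ hSs₀
    have hS2 : 24 * (Cf + 1) * A ≤ ε * S := by
      have hmr : 24 * (Cf + 1) * A / ε ≤ S := hSdef ▸ le_max_right s₀ (24 * (Cf + 1) * A / ε)
      rw [div_le_iff₀ hε] at hmr
      linarith [hmr]
    set s := max 1 (max (12 * (Cf + 1) * A / ε) (4 * (Mf + 1) / ε)) with hsdef
    clear_value s
    refine ⟨s, lt_of_lt_of_le one_pos (hsdef ▸ le_max_left 1 (max (12 * (Cf + 1) * A / ε) (4 * (Mf + 1) / ε))), ?_⟩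
    intro x hx
    set D := ρ 1 x with hD
    clear_value D
    have hD1 : 1 < D := lt_of_le_of_lt (hsdef ▸ le_max_left 1 (max (12 * (Cf + 1) * A / ε) (4 * (Mf + 1) / ε))) hx
    have hDpos : 0 < D := lt_trans one_pos hD1
    have hDs2 : 12 * (Cf + 1) * A ≤ ε * D := by
      have h1 : 12 * (Cf + 1) * A / ε < D :=
        lt_of_le_of_lt (hsdef ▸ le_trans (le_max_left (12 * (Cf + 1) * A / ε) (4 * (Mf + 1) / ε)) (le_max_right 1 _)) hx
      rw [div_lt_iff₀ hε] at h1
      linarith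
    have hDs3 : 4 * (Mf + 1) ≤ ε * D := by
      have h1 : 4 * (Mf + 1) / ε < D :=
        lt_of_le_of_lt (hsdef ▸ le_trans (le_max_right (12 * (Cf + 1) * A / ε) (4 * (Mf + 1) / ε)) (le_max_right 1 _)) hx
      rw [div_lt_iff₀ hε] at h1
      linarith
    obtain ⟨n, c, hc0, hcn, hsteps, htot⟩ := hch 1 x
    rw [← hD] at htot
    have hstepsS : ∀ i < n, ρ (c i) (c (i + 1)) ≤ S := fun i hi => le_trans (hsteps i hi) hSs₀
    obtain ⟨m, c', hc'0, hc'm, hstepsm, hsumm, hcountm⟩ :=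
      aux_coarsen ρ hnn htri S hSpos n c hstepsS
    obtain ⟨g, hgH, hgbd, hgtel⟩ :=
      decompS (2 * S) x m c' (hc'0.trans hc0) (hc'm.trans hcn) hstepsm
    set lam : ℕ → ℝ := fun i => ρ 1 (g i) / D with hlam
    set u : ℕ → V := fun i =>
      if 0 < ρ 1 (g i) then (ρ 1 (g i))⁻¹ • π₁ (g i) else 0 with hu
    clear_value lam u
    have hlam0 : ∀ i, 0 ≤ lam i := by
      intro i
      rw [hlam]
      exact div_nonneg (hnn _ _) hDpos.le
    have humem : ∀ i, u i ∈ convexHull ℝ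
        {w : V | ∃ h ∈ H, 0 < ρ 1 h ∧ w = (ρ 1 h)⁻¹ • π₁ h} := by
      intro i
      by_cases hp : 0 < ρ 1 (g i)
      · simp only [hu, if_pos hp]
        exact subset_convexHull ℝ _ ⟨g i, hgH i, hp, rfl⟩
      · simp only [hu, if_neg hp]
        exact zeroE
    have hunorm : ∀ i, ‖u i‖ ≤ A := by
      intro i
      by_cases hp : 0 < ρ 1 (g i)
      · simp only [hu, if_pos hp]
        rw [norm_smul, Real.norm_eq_abs, abs_of_nonneg (inv_nonneg.mpr (hnn 1 (g i)))]
        have hlin := linH (g i) (hgH i)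
        calc (ρ 1 (g i))⁻¹ * ‖π₁ (g i)‖ ≤ (ρ 1 (g i))⁻¹ * (A * ρ 1 (g i)) :=
              mul_le_mul_of_nonneg_left hlin (inv_nonneg.mpr (hnn 1 (g i)))
          _ = A := by rw [mul_comm A, ← mul_assoc, inv_mul_cancel₀ hp.ne', one_mul]
      · simp only [hu, if_neg hp]
        simpa using le_trans zero_le_one hA1
    have hrepr : ∀ i, π₁ (g i) = (D * lam i) • u i := by
      intro i
      by_cases hp : 0 < ρ 1 (g i)
      · simp only [hu, if_pos hp, hlam]
        rw [smul_smul]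
        have hcoef : D * (ρ 1 (g i) / D) * (ρ 1 (g i))⁻¹ = 1 := by
          field_simp
        rw [hcoef, one_smul]
      · have hz : ρ 1 (g i) = 0 := le_antisymm (not_lt.mp hp) (hnn _ _)
        have hpz : π₁ (g i) = 0 := by
          apply pzero (g i) (hgH i) 1
          intro k hk
          have hr := rpow (g i) (hgH i) k hk
          rw [hz, mul_zero] at hr
          linarith
        simp only [hu, if_neg hp, hpz, hlam, hz, smul_zero, zero_div, mul_zero, zero_smul]
    set Q := ∑ i ∈ Finset.range m, lam i • u i with hQ
    clear_value Q
    have hwQ : ‖D⁻¹ • π₁ x - Q‖ ≤ 2 * Mf / D := by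
      have h1 : D⁻¹ • (π₁ x - ∑ i ∈ Finset.range m, π₁ (g i)) = D⁻¹ • π₁ x - Q := by
        rw [smul_sub, Finset.smul_sum, hQ]
        congr 1
        apply Finset.sum_congr rfl
        intro i _
        rw [hrepr i, smul_smul, ← mul_assoc, inv_mul_cancel₀ hDpos.ne', one_mul]
      rw [← h1, norm_smul, Real.norm_eq_abs, abs_of_nonneg (inv_nonneg.mpr hDpos.le)]
      calc D⁻¹ * ‖π₁ x - ∑ i ∈ Finset.range m, π₁ (g i)‖ ≤ D⁻¹ * (2 * Mf) :=
            mul_le_mul_of_nonneg_left hgtel (inv_nonneg.mpr hDpos.le)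
        _ = 2 * Mf / D := by rw [inv_mul_eq_div]
    have hMfD : 2 * Mf / D ≤ ε / 2 := by
      rw [div_le_iff₀ hDpos]
      nlinarith [hDs3]
    set Λ := ∑ i ∈ Finset.range m, lam i with hΛ
    clear_value Λ
    have hΛ0 : 0 ≤ Λ := by
      rw [hΛ]
      exact Finset.sum_nonneg (fun i _ => hlam0 i)
    -- the crucial estimate : (Λ - 1) * A ≤ ε / 2
    have hΛD : Λ * D = ∑ i ∈ Finset.range m, ρ 1 (g i) := by
      rw [hΛ, Finset.sum_mul]
      apply Finset.sum_congr rfl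
      intro i _
      rw [hlam, div_mul_cancel₀ _ hDpos.ne']
    have hf1 : ∑ i ∈ Finset.range m, ρ 1 (g i) ≤
        (∑ i ∈ Finset.range m, ρ (c' i) (c' (i + 1))) + 2 * Cf * (m : ℝ) := by
      have h1 := Finset.sum_le_sum (fun i hi => (hgbd i (Finset.mem_range.mp hi)).2)
      have h2 : ∑ i ∈ Finset.range m, (ρ (c' i) (c' (i + 1)) + 2 * Cf) =
          (∑ i ∈ Finset.range m, ρ (c' i) (c' (i + 1))) + (m : ℝ) * (2 * Cf) := by
        rw [Finset.sum_add_distrib, Finset.sum_const, Finset.card_range, nsmul_eq_mul]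
      calc ∑ i ∈ Finset.range m, ρ 1 (g i)
          ≤ ∑ i ∈ Finset.range m, (ρ (c' i) (c' (i + 1)) + 2 * Cf) := h1
        _ = (∑ i ∈ Finset.range m, ρ (c' i) (c' (i + 1))) + (m : ℝ) * (2 * Cf) := h2
        _ = (∑ i ∈ Finset.range m, ρ (c' i) (c' (i + 1))) + 2 * Cf * (m : ℝ) := by ring
    have hf2 : ∑ i ∈ Finset.range m, ρ (c' i) (c' (i + 1)) ≤ (1 + ε') * D :=
      le_trans hsumm htot
    have hf3 : (m : ℝ) * S ≤ (1 + ε') * D + S :=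
      le_trans hcountm (by linarith [htot])
    have hm0 : (0:ℝ) ≤ (m : ℝ) := Nat.cast_nonneg m
    have hΛfinal : (Λ - 1) * A ≤ ε / 2 := by
      have hc1 : A * (Λ * D) ≤ A * ((1 + ε') * D) + (2 * Cf * A) * (m : ℝ) := by
        have c1a := mul_le_mul_of_nonneg_left hf1 hA0.le
        have c1b := mul_le_mul_of_nonneg_left hf2 hA0.le
        rw [hΛD]
        linarith [c1a, c1b]
      have hc2 : (2 * Cf * A) * ((m : ℝ) * S) ≤ (2 * Cf * A) * ((1 + ε') * D + S) :=
        mul_le_mul_of_nonneg_left hf3 (by positivity)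
      have hc3 : (A * (Λ * D)) * S ≤ (A * ((1 + ε') * D) + (2 * Cf * A) * (m : ℝ)) * S :=
        mul_le_mul_of_nonneg_right hc1 hSpos.le
      have he1s : A * ε' * D * S ≤ ((ε / 6) * D) * S :=
        mul_le_mul_of_nonneg_right (mul_le_mul_of_nonneg_right hε'A hDpos.le) hSpos.le
      have he2 : 4 * Cf * A * D ≤ ((ε / 6) * S) * D := by
        have h24 : 4 * Cf * A ≤ (ε / 6) * S := by
          have hCA : 0 ≤ A := hA0.le
          have := mul_nonneg hCf0 hCA
          linarith [hS2]
        exact mul_le_mul_of_nonneg_right h24 hDpos.le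
      have he3 : 2 * Cf * A * S ≤ ((ε / 6) * D) * S := by
        have h12 : 2 * Cf * A ≤ (ε / 6) * D := by
          have := mul_nonneg hCf0 hA0.le
          linarith [hDs2]
        exact mul_le_mul_of_nonneg_right h12 hSpos.le
      have he4 : (2 * Cf * A) * ((1 + ε') * D) ≤ 4 * Cf * A * D := by
        have hnn4 : 0 ≤ Cf * A * D * (1 - ε') :=
          mul_nonneg (mul_nonneg (mul_nonneg hCf0 hA0.le) hDpos.le) (by linarith)
        linarith [hnn4]
      have main : (Λ * A) * (D * S) ≤ (A + ε / 2) * (D * S) := by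
        linarith [hc2, hc3, he1s, he2, he3, he4]
      have hDS : (0:ℝ) < D * S := mul_pos hDpos hSpos
      have hle : Λ * A ≤ A + ε / 2 := le_of_mul_le_mul_right main hDS
      linarith [hle]
    by_cases hΛ1 : Λ ≤ 1
    · refine ⟨Q, ?_, ?_⟩
      · rw [hQ]
        exact aux_sum_mem_convex _ (convex_convexHull ℝ _) zeroE m lam u
          (fun i _ => hlam0 i) (fun i _ => humem i) (hΛ ▸ hΛ1)
      calc ‖D⁻¹ • π₁ x - Q‖ ≤ 2 * Mf / D := hwQ
        _ ≤ ε / 2 := hMfD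
        _ ≤ ε := by linarith
    · push_neg at hΛ1
      have hΛpos : 0 < Λ := lt_trans one_pos hΛ1
      refine ⟨Λ⁻¹ • Q, ?_, ?_⟩
      · have hmem := aux_sum_mem_convex _ (convex_convexHull ℝ _) zeroE m
          (fun i => lam i / Λ) u (fun i _ => div_nonneg (hlam0 i) hΛpos.le)
          (fun i _ => humem i)
          (by rw [← Finset.sum_div, ← hΛ, div_self hΛpos.ne'])
        have heq : ∑ i ∈ Finset.range m, (lam i / Λ) • u i = Λ⁻¹ • Q := by
          rw [hQ, Finset.smul_sum]
          apply Finset.sum_congr rfl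
          intro i _
          rw [smul_smul, div_eq_mul_inv, mul_comm]
        rwa [heq] at hmem
      · have hQnorm : ‖Q‖ ≤ Λ * A := by
          rw [hQ]
          calc ‖∑ i ∈ Finset.range m, lam i • u i‖
              ≤ ∑ i ∈ Finset.range m, ‖lam i • u i‖ := norm_sum_le _ _
            _ ≤ ∑ i ∈ Finset.range m, lam i * A := by
                apply Finset.sum_le_sum
                intro i _
                rw [norm_smul, Real.norm_eq_abs, abs_of_nonneg (hlam0 i)]
                exact mul_le_mul_of_nonneg_left (hunorm i) (hlam0 i)
            _ = Λ * A := by rw [← Finset.sum_mul, ← hΛ]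
        have hinv1 : Λ⁻¹ ≤ 1 := by
          rw [inv_le_one_iff₀]
          right; exact hΛ1.le
        have hinv0 : 0 ≤ 1 - Λ⁻¹ := by linarith
        have hdiff : ‖Q - Λ⁻¹ • Q‖ ≤ (Λ - 1) * A := by
          have h1 : Q - Λ⁻¹ • Q = (1 - Λ⁻¹) • Q := by rw [sub_smul, one_smul]
          rw [h1, norm_smul, Real.norm_eq_abs, abs_of_nonneg hinv0]
          have h2 : (1 - Λ⁻¹) * ‖Q‖ ≤ (1 - Λ⁻¹) * (Λ * A) :=
            mul_le_mul_of_nonneg_left hQnorm hinv0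
          have h3 : (1 - Λ⁻¹) * (Λ * A) = (Λ - 1) * A := by
            field_simp
          linarith
        calc ‖D⁻¹ • π₁ x - Λ⁻¹ • Q‖
            = ‖(D⁻¹ • π₁ x - Q) + (Q - Λ⁻¹ • Q)‖ := by
              congr 1
              abel
          _ ≤ ‖D⁻¹ • π₁ x - Q‖ + ‖Q - Λ⁻¹ • Q‖ := norm_add_le _ _
          _ ≤ 2 * Mf / D + (Λ - 1) * A := add_le_add hwQ hdiff
          _ ≤ ε / 2 + ε / 2 := add_le_add hMfD hΛfinal
          _ = ε := by ring
  -- conclusion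
  have hEclosed : IsClosed (closure (convexHull ℝ
      {w : V | ∃ h ∈ H, 0 < ρ 1 h ∧ w = (ρ 1 h)⁻¹ • π₁ h})) := isClosed_closure
  have hEconv : Convex ℝ (closure (convexHull ℝ
      {w : V | ∃ h ∈ H, 0 < ρ 1 h ∧ w = (ρ 1 h)⁻¹ • π₁ h})) :=
    (convex_convexHull ℝ _).closure
  have hEne : (closure (convexHull ℝ
      {w : V | ∃ h ∈ H, 0 < ρ 1 h ∧ w = (ρ 1 h)⁻¹ • π₁ h})).Nonempty :=
    ⟨0, subset_closure zeroE⟩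
  apply Set.Subset.antisymm
  · refine Set.subset_iInter fun s => Set.subset_iInter fun hs => ?_
    have hgen : {w : V | ∃ h ∈ H, 0 < ρ 1 h ∧ w = (ρ 1 h)⁻¹ • π₁ h} ⊆
        closure (convexHull ℝ {w : V | ∃ x : G, s < ρ 1 x ∧ w = (ρ 1 x)⁻¹ • π₁ x}) := by
      rintro w ⟨h, hh, hph, rfl⟩
      by_cases hcase : ∃ n : ℕ, 1 ≤ n ∧ s < ρ 1 (h ^ n)
      · obtain ⟨n, hn1, hns⟩ := hcase
        have hDn : 0 < ρ 1 (h ^ n) := lt_trans hs hns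
        have hv : (ρ 1 (h ^ n))⁻¹ • π₁ (h ^ n) ∈
            convexHull ℝ {w : V | ∃ x : G, s < ρ 1 x ∧ w = (ρ 1 x)⁻¹ • π₁ x} :=
          subset_convexHull ℝ _ ⟨h ^ n, hns, rfl⟩
        have hn0 : (0:ℝ) < (n : ℝ) := by exact_mod_cast Nat.pos_of_ne_zero (by omega)
        have hlam0 : 0 < ρ 1 (h ^ n) / ((n : ℝ) * ρ 1 h) :=
          div_pos hDn (mul_pos hn0 hph)
        have hlam1 : ρ 1 (h ^ n) / ((n : ℝ) * ρ 1 h) ≤ 1 := by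
          rw [div_le_one (mul_pos hn0 hph)]
          exact rpow h hh n hn1
        have hcomb := (convex_convexHull ℝ
            {w : V | ∃ x : G, s < ρ 1 x ∧ w = (ρ 1 x)⁻¹ • π₁ x}) hv (zeroS s)
          hlam0.le (by linarith : 0 ≤ 1 - ρ 1 (h ^ n) / ((n : ℝ) * ρ 1 h)) (by ring)
        have heq : (ρ 1 (h ^ n) / ((n : ℝ) * ρ 1 h)) • ((ρ 1 (h ^ n))⁻¹ • π₁ (h ^ n)) +
            (1 - ρ 1 (h ^ n) / ((n : ℝ) * ρ 1 h)) • (0 : V) = (ρ 1 h)⁻¹ • π₁ h := by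
          rw [smul_zero, add_zero, ppow, smul_smul, smul_smul]
          congr 1
          field_simp
        exact subset_closure (heq ▸ hcomb)
      · push_neg at hcase
        have hz : π₁ h = 0 := pzero h hh s (fun n hn => hcase n hn)
        rw [hz, smul_zero]
        exact subset_closure (zeroS s)
    exact closure_minimal (convexHull_min hgen (convex_convexHull ℝ _).closure)
      isClosed_closure
  · intro v hv
    have hvs : ∀ s : ℝ, 0 < s →
        v ∈ closure (convexHull ℝ {w : V | ∃ x : G, s < ρ 1 x ∧ w = (ρ 1 x)⁻¹ • π₁ x}) := by
      intro s hs
      exact Set.mem_iInter.mp (Set.mem_iInter.mp hv s) hs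
    have hdist : ∀ ε : ℝ, 0 < ε → Metric.infDist v (closure (convexHull ℝ
        {w : V | ∃ h ∈ H, 0 < ρ 1 h ∧ w = (ρ 1 h)⁻¹ • π₁ h})) ≤ ε := by
      intro ε hε
      obtain ⟨s, hs, hkey⟩ := key ε hε
      set E := closure (convexHull ℝ
        {w : V | ∃ h ∈ H, 0 < ρ 1 h ∧ w = (ρ 1 h)⁻¹ • π₁ h}) with hEdef
      have hDclosed : IsClosed (E + Metric.closedBall (0:V) ε) :=
        hEclosed.add_right_of_isCompact (isCompact_closedBall 0 ε)
      have hDconv : Convex ℝ (E + Metric.closedBall (0:V) ε) :=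
        hEconv.add (convex_closedBall _ _)
      have hsub : {w : V | ∃ x : G, s < ρ 1 x ∧ w = (ρ 1 x)⁻¹ • π₁ x} ⊆
          E + Metric.closedBall (0:V) ε := by
        rintro w ⟨x, hx, rfl⟩
        obtain ⟨q, hq, hqd⟩ := hkey x hx
        have hqE : q ∈ E := subset_closure hq
        have hsplit : (ρ 1 x)⁻¹ • π₁ x = q + ((ρ 1 x)⁻¹ • π₁ x - q) := by abel
        rw [hsplit]
        exact Set.add_mem_add hqE (by simpa [mem_closedBall_zero_iff] using hqd)
      have hvD : v ∈ E + Metric.closedBall (0:V) ε :=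
        closure_minimal (convexHull_min hsub hDconv) hDclosed (hvs s hs)
      obtain ⟨q, hq, b, hb, hqb⟩ := Set.mem_add.mp hvD
      have hd1 : Metric.infDist v E ≤ dist v q := Metric.infDist_le_dist_of_mem hq
      have hd2 : dist v q = ‖b‖ := by
        rw [dist_eq_norm, ← hqb]
        simp
      have hbε : ‖b‖ ≤ ε := mem_closedBall_zero_iff.mp hb
      rw [hEdef] at hd1
      linarith
    have hd0 : Metric.infDist v (closure (convexHull ℝ
        {w : V | ∃ h ∈ H, 0 < ρ 1 h ∧ w = (ρ 1 h)⁻¹ • π₁ h})) = 0 := by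
      by_contra hcon
      have hpos : 0 < Metric.infDist v (closure (convexHull ℝ
          {w : V | ∃ h ∈ H, 0 < ρ 1 h ∧ w = (ρ 1 h)⁻¹ • π₁ h})) :=
        lt_of_le_of_ne Metric.infDist_nonneg (Ne.symm hcon)
      have := hdist _ (half_pos hpos)
      linarith
    exact (hEclosed.mem_iff_infDist_zero hEne).mpr hd0
end

section
/- Let H be a group, V a finite-dimensional real vector space, and π₁ : H → V a group homomorphism into the additive group of V. Let ℓ : H → [0,∞) satisfy ℓ(h⁻¹) = ℓ(h) and ℓ(gh) ≤ ℓ(g) + ℓ(h) for all g,h ∈ H, and π₁(h) = 0 whenever ℓ(h) = 0. Suppose ‖·‖₀ is a norm on V whose closed unit ball equals the closed convex hull of the set {π₁(h)/ℓ(h) : h ∈ H, ℓ(h) > 0}. Then for every ε > 0 there exists s₀ > 0 such that for every s > s₀ and every v ∈ V with ‖v‖₀ = 1, there exists h ∈ H with (1−ε)s ≤ ℓ(h) ≤ (1+ε)s and ‖π₁(h)/ℓ(h) − v‖₀ ≤ ε. -/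
open Filter Topology

lemma sa_list_sum_map {ι M : Type*} [AddCommMonoid M] (s : Finset ι) (f : ι → M) :
    (s.toList.map f).sum = ∑ i ∈ s, f i := by
  rw [Finset.sum, ← Finset.coe_toList s, Multiset.map_coe, Multiset.sum_coe]

section sa_aux
variable {H : Type*} [Group H] {V : Type*} [NormedAddCommGroup V] [NormedSpace ℝ V]

omit [NormedSpace ℝ V] in
lemma sa_pi_one (π₁ : H → V) (hhom : ∀ g h : H, π₁ (g * h) = π₁ g + π₁ h) : π₁ 1 = 0 := by
  have h := hhom 1 1; rw [one_mul] at h; exact (left_eq_add.mp h)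

omit [NormedSpace ℝ V] in
lemma sa_pi_pow (π₁ : H → V) (hhom : ∀ g h : H, π₁ (g * h) = π₁ g + π₁ h) (h : H) (n : ℕ) :
    π₁ (h ^ n) = n • π₁ h := by
  induction n with
  | zero => simpa using sa_pi_one π₁ hhom
  | succ n ih => rw [pow_succ, hhom, ih, succ_nsmul]

omit [NormedSpace ℝ V] in
lemma sa_pi_list (π₁ : H → V) (hhom : ∀ g h : H, π₁ (g * h) = π₁ g + π₁ h) (l : List H) :
    π₁ l.prod = (l.map π₁).sum := by
  induction l with
  | nil => simpa using sa_pi_one π₁ hhom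
  | cons a l ih => simp [hhom, ih]

lemma sa_len_list (ℓ : H → ℝ) (hsub : ∀ g h : H, ℓ (g * h) ≤ ℓ g + ℓ h) (l : List H) :
    ℓ l.prod ≤ ℓ 1 + (l.map ℓ).sum := by
  induction l with
  | nil => simp
  | cons a l ih =>
    simp only [List.prod_cons, List.map_cons, List.sum_cons]
    calc ℓ (a * l.prod) ≤ ℓ a + ℓ l.prod := hsub a l.prod
    _ ≤ ℓ a + (ℓ 1 + (l.map ℓ).sum) := by linarith
    _ = ℓ 1 + (ℓ a + (l.map ℓ).sum) := by ring

lemma sa_len_pow (ℓ : H → ℝ) (hsub : ∀ g h : H, ℓ (g * h) ≤ ℓ g + ℓ h) (h : H) (n : ℕ) :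
    ℓ (h ^ n) ≤ ℓ 1 + n * ℓ h := by
  induction n with
  | zero => simp
  | succ n ih =>
    have h2 := hsub (h ^ n) h
    rw [← pow_succ] at h2
    push_cast
    nlinarith [h2]

end sa_aux

set_option maxHeartbeats 2000000 in
/-- **Approximation in the abelianized group** (Lemma 6.19). Let `H` be a group, `V` a
finite-dimensional real normed space, `π₁ : H → V` a homomorphism into the additive group of
`V`, and `ℓ : H → [0,∞)` a symmetric subadditive length function with `π₁(h) = 0` whenever
`ℓ(h) = 0`. Suppose the closed unit ball of the norm of `V` is the closed convex hull of the
points `π₁(h)/ℓ(h)`, `ℓ(h) > 0`. Then for every `ε > 0` there is `s₀ > 0` such that for every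
`s > s₀` and every unit vector `v` there is `h ∈ H` with `(1−ε)s ≤ ℓ(h) ≤ (1+ε)s` and
`‖π₁(h)/ℓ(h) − v‖ ≤ ε`. -/
theorem sphere_approximation
    {H : Type*} [Group H]
    {V : Type*} [NormedAddCommGroup V] [NormedSpace ℝ V] [FiniteDimensional ℝ V]
    (π₁ : H → V) (hhom : ∀ g h : H, π₁ (g * h) = π₁ g + π₁ h)
    (ℓ : H → ℝ) (hnonneg : ∀ h, 0 ≤ ℓ h)
    (hsymm : ∀ h : H, ℓ h⁻¹ = ℓ h)
    (hsub : ∀ g h : H, ℓ (g * h) ≤ ℓ g + ℓ h)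
    (hker : ∀ h : H, ℓ h = 0 → π₁ h = 0)
    (hball : {v : V | ‖v‖ ≤ 1} =
      closure (convexHull ℝ {w : V | ∃ h : H, 0 < ℓ h ∧ w = (ℓ h)⁻¹ • π₁ h})) :
    ∀ ε : ℝ, 0 < ε → ∃ s₀ : ℝ, 0 < s₀ ∧ ∀ s : ℝ, s₀ < s → ∀ v : V, ‖v‖ = 1 →
      ∃ h : H, (1 - ε) * s ≤ ℓ h ∧ ℓ h ≤ (1 + ε) * s ∧
        ‖(ℓ h)⁻¹ • π₁ h - v‖ ≤ ε := by
  classical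
  intro ε hε
  set S : Set V := {w : V | ∃ h : H, 0 < ℓ h ∧ w = (ℓ h)⁻¹ • π₁ h} with hS
  set ε' : ℝ := min ε (1/2) with hε'def
  have hε' : 0 < ε' := lt_min hε (by norm_num)
  have hε'le : ε' ≤ ε := min_le_left _ _
  have hε'half : ε' ≤ 1/2 := min_le_right _ _
  set δ : ℝ := ε' / 8 with hδdef
  have hδ : 0 < δ := by positivity
  -- Key norm bound
  have hπnorm : ∀ h : H, ‖π₁ h‖ ≤ ℓ h := by
    intro h
    rcases (hnonneg h).eq_or_lt with h0 | hpos
    · rw [hker h h0.symm]; simp [← h0]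
    · have hmem : (ℓ h)⁻¹ • π₁ h ∈ {v : V | ‖v‖ ≤ 1} := by
        rw [hball]
        exact subset_closure (subset_convexHull ℝ S ⟨h, hpos, rfl⟩)
      have : ‖(ℓ h)⁻¹ • π₁ h‖ ≤ 1 := hmem
      rw [norm_smul, Real.norm_eq_abs, abs_inv, abs_of_pos hpos] at this
      calc ‖π₁ h‖ = ℓ h * ((ℓ h)⁻¹ * ‖π₁ h‖) := by field_simp
      _ ≤ ℓ h * 1 := by nlinarith
      _ = ℓ h := mul_one _
  -- Pointwise approximation with explicit cost
  have P : ∀ v : V, ‖v‖ = 1 → ∃ C : ℝ, 0 ≤ C ∧ ∀ u : V, dist u v < δ / 2 →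
      ∃ (ι : Type) (_ : Fintype ι) (w : ι → ℝ) (g : ι → H),
        (∀ i, 0 ≤ w i) ∧ (∑ i, w i = 1) ∧ (∀ i, 0 < ℓ (g i)) ∧
        (ℓ 1 + ∑ i, (ℓ (g i) + ℓ 1) ≤ C) ∧
        ‖(∑ i, w i • ((ℓ (g i))⁻¹ • π₁ (g i))) - u‖ ≤ δ := by
    intro v hv
    have hvmem : v ∈ closure (convexHull ℝ S) := by
      rw [← hball]; simp [hv]
    obtain ⟨p, hp, hdist⟩ := Metric.mem_closure_iff.mp hvmem (δ / 2) (by positivity)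
    obtain ⟨ι, inst, w, z, hw0, hw1, hz, hsum⟩ := mem_convexHull_iff_exists_fintype.mp hp
    choose g hg1 hg2 using hz
    refine ⟨ℓ 1 + ∑ i, (ℓ (g i) + ℓ 1), ?_, fun u hu => ⟨ι, inst, w, g, hw0, hw1, hg1,
      le_refl _, ?_⟩⟩
    · have h1 := hnonneg (1 : H)
      have h2 : (0:ℝ) ≤ ∑ i, (ℓ (g i) + ℓ 1) :=
        Finset.sum_nonneg fun i _ => by have := hnonneg (g i); linarith
      linarith
    · have hpz : (∑ i, w i • ((ℓ (g i))⁻¹ • π₁ (g i))) = p := by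
        rw [← hsum]
        exact Finset.sum_congr rfl fun i _ => by rw [← hg2 i]
      rw [hpz]
      have h2 : ‖p - v‖ < δ / 2 := by rw [← dist_eq_norm, dist_comm]; exact hdist
      have h3 : ‖v - u‖ < δ / 2 := by rw [← dist_eq_norm, dist_comm]; exact hu
      calc ‖p - u‖ = ‖(p - v) + (v - u)‖ := by abel_nf
      _ ≤ ‖p - v‖ + ‖v - u‖ := norm_add_le _ _
      _ ≤ δ := by linarith
  -- Compactness: uniform cost bound
  have hcomp : ∃ C : ℝ, 0 < C ∧ ∀ u : V, ‖u‖ = 1 →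
      ∃ (ι : Type) (_ : Fintype ι) (w : ι → ℝ) (g : ι → H),
        (∀ i, 0 ≤ w i) ∧ (∑ i, w i = 1) ∧ (∀ i, 0 < ℓ (g i)) ∧
        (ℓ 1 + ∑ i, (ℓ (g i) + ℓ 1) ≤ C) ∧
        ‖(∑ i, w i • ((ℓ (g i))⁻¹ • π₁ (g i))) - u‖ ≤ δ := by
    set F : V → ℝ := fun v => if hv : ‖v‖ = 1 then (P v hv).choose else 0 with hF
    have hFnonneg : ∀ v, 0 ≤ F v := by
      intro v
      by_cases hv : ‖v‖ = 1
      · simp only [hF, dif_pos hv]; exact (P v hv).choose_spec.1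
      · simp [hF, dif_neg hv]
    obtain ⟨t, ht, hcov⟩ := (isCompact_sphere (0:V) 1).elim_nhds_subcover
      (fun v => Metric.ball v (δ / 2)) (fun v _ => Metric.ball_mem_nhds v (half_pos hδ))
    refine ⟨1 + ∑ v ∈ t, F v, by have := Finset.sum_nonneg (fun v _ => hFnonneg v) (s := t); linarith, ?_⟩
    intro u hu
    have hu' : u ∈ Metric.sphere (0:V) 1 := by simp [hu]
    obtain ⟨v, hvt, hvb⟩ := Set.mem_iUnion₂.mp (hcov hu')
    have hvs : ‖v‖ = 1 := by simpa using ht v hvt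
    have hdistuv : dist u v < δ / 2 := Metric.mem_ball.mp hvb
    obtain ⟨ι, inst, w, g, h1, h2, h3, h4, h5⟩ := (P v hvs).choose_spec.2 u hdistuv
    refine ⟨ι, inst, w, g, h1, h2, h3, ?_, h5⟩
    have hFv : F v = (P v hvs).choose := by simp [hF, dif_pos hvs]
    have hle : F v ≤ ∑ v ∈ t, F v := Finset.single_le_sum (fun i _ => hFnonneg i) hvt
    rw [hFv] at hle
    linarith
  obtain ⟨C, hC, hgood⟩ := hcomp
  refine ⟨max 1 (32 * C / ε'), lt_of_lt_of_le one_pos (le_max_left _ _), ?_⟩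
  intro s hs v hv
  have hs1 : 1 < s := lt_of_le_of_lt (le_max_left _ _) hs
  have hspos : 0 < s := by linarith
  have hCs : C ≤ ε' * s / 32 := by
    have h1 : 32 * C / ε' < s := lt_of_le_of_lt (le_max_right _ _) hs
    rw [div_lt_iff₀ hε'] at h1
    nlinarith
  obtain ⟨ι, inst, w, g, hw0, hw1, hgpos, hcost, happrox⟩ := hgood v hv
  set nn : ι → ℕ := fun i => ⌈s * w i / ℓ (g i)⌉₊ with hnn
  set h : H := ((Finset.univ.toList (α := ι)).map (fun i => g i ^ nn i)).prod with hh
  -- the coefficients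
  have hcnonneg : ∀ i, 0 ≤ s * w i / ℓ (g i) := fun i =>
    div_nonneg (mul_nonneg hspos.le (hw0 i)) (hgpos i).le
  have hcle : ∀ i, s * w i / ℓ (g i) ≤ (nn i : ℝ) := fun i => by
    rw [hnn]; exact Nat.le_ceil _
  have hcge : ∀ i, (nn i : ℝ) ≤ s * w i / ℓ (g i) + 1 := fun i => by
    rw [hnn]; exact (Nat.ceil_lt_add_one (hcnonneg i)).le
  -- value of π₁ h
  have hπh : π₁ h = ∑ i, (nn i : ℝ) • π₁ (g i) := by
    rw [hh, sa_pi_list π₁ hhom, List.map_map]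
    have he : (π₁ ∘ fun i => g i ^ nn i) = fun i => π₁ (g i ^ nn i) := rfl
    rw [he, sa_list_sum_map]
    exact Finset.sum_congr rfl fun i _ => by
      rw [sa_pi_pow π₁ hhom, Nat.cast_smul_eq_nsmul]
  -- length bound for h
  have hlenh : ℓ h ≤ ℓ 1 + ∑ i, (ℓ (1:H) + (nn i : ℝ) * ℓ (g i)) := by
    rw [hh]
    refine (sa_len_list ℓ hsub _).trans ?_
    rw [List.map_map]
    have he : (ℓ ∘ fun i => g i ^ nn i) = fun i => ℓ (g i ^ nn i) := rfl
    rw [he, sa_list_sum_map]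
    have h2 : ∑ i, ℓ (g i ^ nn i) ≤ ∑ i, (ℓ (1:H) + (nn i : ℝ) * ℓ (g i)) :=
      Finset.sum_le_sum fun i _ => sa_len_pow ℓ hsub (g i) (nn i)
    linarith
  clear_value h
  clear_value nn
  clear hh hnn
  -- cost bounds extracted
  have hsumC : ∑ i, ℓ (g i) ≤ C := by
    have h1 := hnonneg (1 : H)
    have h2 : ∑ i, ℓ (g i) ≤ ∑ i, (ℓ (g i) + ℓ 1) :=
      Finset.sum_le_sum fun i _ => by linarith
    linarith
  have hsum1C : ℓ 1 + ∑ i : ι, (ℓ (1:H)) ≤ C := by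
    have h2 : (0:ℝ) ≤ ∑ i, ℓ (g i) := Finset.sum_nonneg fun i _ => (hgpos i).le
    have h3 : ℓ 1 + ∑ i, (ℓ (g i) + ℓ 1) = (ℓ 1 + ∑ i : ι, ℓ (1:H)) + ∑ i, ℓ (g i) := by
      rw [Finset.sum_add_distrib]; ring
    have h4 := hcost
    rw [h3] at h4
    linarith
  -- upper bound for ℓ h
  have hnl : ∑ i, (nn i : ℝ) * ℓ (g i) ≤ s + C := by
    have h1 : ∀ i ∈ Finset.univ, (nn i : ℝ) * ℓ (g i) ≤ s * w i + ℓ (g i) := by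
      intro i _
      have h2 : (nn i : ℝ) * ℓ (g i) ≤ (s * w i / ℓ (g i) + 1) * ℓ (g i) := by
        have := hgpos i; nlinarith [hcge i]
      have h3 : (s * w i / ℓ (g i)) * ℓ (g i) = s * w i :=
        div_mul_cancel₀ _ (hgpos i).ne'
      nlinarith
    calc ∑ i, (nn i : ℝ) * ℓ (g i) ≤ ∑ i, (s * w i + ℓ (g i)) := Finset.sum_le_sum h1
    _ = s * (∑ i, w i) + ∑ i, ℓ (g i) := by rw [Finset.sum_add_distrib, Finset.mul_sum]
    _ ≤ s + C := by rw [hw1]; linarith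
  have hupper : ℓ h ≤ s + 2 * C := by
    have h3 : ℓ 1 + ∑ i, (ℓ (1:H) + (nn i : ℝ) * ℓ (g i)) =
        (ℓ 1 + ∑ i : ι, ℓ (1:H)) + ∑ i, (nn i : ℝ) * ℓ (g i) := by
      rw [Finset.sum_add_distrib]; ring
    rw [h3] at hlenh
    linarith
  -- main norm estimate
  have hkey : ‖π₁ h - s • v‖ ≤ C + s * δ := by
    set p : V := ∑ i, w i • ((ℓ (g i))⁻¹ • π₁ (g i)) with hp
    have hsp : s • p = ∑ i, (s * w i / ℓ (g i)) • π₁ (g i) := by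
      rw [hp, Finset.smul_sum]
      refine Finset.sum_congr rfl fun i _ => ?_
      rw [smul_smul, smul_smul, div_eq_mul_inv]
    have hsplit : π₁ h - s • v =
        (∑ i, ((nn i : ℝ) - s * w i / ℓ (g i)) • π₁ (g i)) + s • (p - v) := by
      rw [hπh, smul_sub, hsp]
      simp only [sub_smul, Finset.sum_sub_distrib]
      abel
    rw [hsplit]
    have h1 : ‖∑ i, ((nn i : ℝ) - s * w i / ℓ (g i)) • π₁ (g i)‖ ≤ C := by
      calc ‖∑ i, ((nn i : ℝ) - s * w i / ℓ (g i)) • π₁ (g i)‖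
          ≤ ∑ i, ‖((nn i : ℝ) - s * w i / ℓ (g i)) • π₁ (g i)‖ := norm_sum_le _ _
      _ ≤ ∑ i, ℓ (g i) := by
          refine Finset.sum_le_sum fun i _ => ?_
          rw [norm_smul, Real.norm_eq_abs]
          have ha : |(nn i : ℝ) - s * w i / ℓ (g i)| ≤ 1 := by
            rw [abs_le]; constructor <;> [linarith [hcle i]; linarith [hcge i]]
          have hb := hπnorm (g i)
          have hc := norm_nonneg (π₁ (g i))
          nlinarith
      _ ≤ C := hsumC
    have h2 : ‖s • (p - v)‖ ≤ s * δ := by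
      rw [norm_smul, Real.norm_eq_abs, abs_of_pos hspos]
      exact mul_le_mul_of_nonneg_left happrox hspos.le
    calc ‖(∑ i, ((nn i : ℝ) - s * w i / ℓ (g i)) • π₁ (g i)) + s • (p - v)‖
        ≤ ‖∑ i, ((nn i : ℝ) - s * w i / ℓ (g i)) • π₁ (g i)‖ + ‖s • (p - v)‖ :=
          norm_add_le _ _
    _ ≤ C + s * δ := by linarith
  -- lower bound for ℓ h
  have hlow : s - (C + s * δ) ≤ ℓ h := by
    have h1 : ‖s • v‖ - ‖π₁ h‖ ≤ ‖s • v - π₁ h‖ := norm_sub_norm_le _ _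
    have h2 : ‖s • v - π₁ h‖ = ‖π₁ h - s • v‖ := norm_sub_rev _ _
    have h3 : ‖s • v‖ = s := by
      rw [norm_smul, Real.norm_eq_abs, abs_of_pos hspos, hv, mul_one]
    have h4 := hπnorm h
    linarith
  -- numerics
  have hδs : δ = ε' / 8 := rfl
  have hl1 : (1 - ε') * s ≤ ℓ h := by nlinarith
  have hl2 : ℓ h ≤ (1 + ε') * s := by nlinarith
  have hpos : 0 < ℓ h := by nlinarith
  have hfinal : ‖(ℓ h)⁻¹ • π₁ h - v‖ ≤ ε' := by
    have hne : ℓ h ≠ 0 := hpos.ne'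
    have heq : (ℓ h)⁻¹ • π₁ h - v = (ℓ h)⁻¹ • (π₁ h - ℓ h • v) := by
      rw [smul_sub, smul_smul, inv_mul_cancel₀ hne, one_smul]
    rw [heq, norm_smul, Real.norm_eq_abs, abs_inv, abs_of_pos hpos]
    have hnum : ‖π₁ h - ℓ h • v‖ ≤ 3 * C + 2 * (s * δ) := by
      have h1 : π₁ h - ℓ h • v = (π₁ h - s • v) + (s - ℓ h) • v := by
        rw [sub_smul]; abel
      rw [h1]
      have h2 : ‖(s - ℓ h) • v‖ = |s - ℓ h| := by
        rw [norm_smul, Real.norm_eq_abs, hv, mul_one]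
      have h3 : |s - ℓ h| ≤ 2 * C + s * δ := by
        rw [abs_le]; constructor <;> nlinarith
      calc ‖(π₁ h - s • v) + (s - ℓ h) • v‖ ≤ ‖π₁ h - s • v‖ + ‖(s - ℓ h) • v‖ :=
        norm_add_le _ _
      _ ≤ 3 * C + 2 * (s * δ) := by rw [h2]; linarith
    rw [inv_mul_le_iff₀ hpos]
    nlinarith
  refine ⟨h, ?_, ?_, ?_⟩
  · nlinarith
  · nlinarith
  · linarith
end
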